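/- arXiv:2306.00142 — 6 statements merged into one kernel-verified Lean document; each statement's English description precedes it below -/
import Mathlib

section
/- Assume the scheme setting with nonnegative initial data u₀ ∈ (L¹ ∩ BV)(ℝ). Then the approximations remain nonnegative: u^n_i ≥ 0 for all i ∈ ℤ and all 0 ≤ n ≤ N. -/
open MeasureTheory

/-- (H2)/(H3)-type regularity: `g` is `C²`, bounded, of bounded variation,
with bounded and Lipschitz first derivative. -/
def SmoothData (g : ℝ → ℝ) : Prop :=
  ContDiff ℝ 2 g ∧ (∃ M, ∀ x, |g x| ≤ M) ∧ BoundedVariationOn g Set.univ ∧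
    (∃ M, ∀ x, |deriv g x| ≤ M) ∧ ∃ L : NNReal, LipschitzWith L (deriv g)

/-- The discrete convolution `c^n_{i+1/2} = Δx Σ_p μ(x_{i+1/2−p}) β(u^n_{p+1/2})`
(indexed by `i`), where `x_{i+1/2-p} = (i-p)Δx + Δx/2` and
`u^n_{p+1/2} = α u^n_p + (1−α) u^n_{p+1}`. -/
noncomputable def cdisc (μ β : ℝ → ℝ) (Δx αc : ℝ) (v : ℤ → ℝ) (i : ℤ) : ℝ :=
  Δx * ∑' p : ℤ, μ (((i - p : ℤ) : ℝ) * Δx + Δx / 2)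
      * β (αc * v p + (1 - αc) * v (p + 1))

/-- The Lax–Friedrichs type numerical flux
`F^n_{i+1/2}(a,b) = ν(c^n_{i+1/2})(f(a)+f(b))/2 − θ(b−a)/(2λ)`. -/
noncomputable def Fnum (f ν μ β : ℝ → ℝ) (lam θ Δx αc : ℝ) (v : ℤ → ℝ) (i : ℤ)
    (a b : ℝ) : ℝ :=
  ν (cdisc μ β Δx αc v i) * (f a + f b) / 2 - θ * (b - a) / (2 * lam)

/-- `u : ℕ → ℤ → ℝ` is the finite volume approximation: `u⁰_i` is the cell average of
`u₀` over `C_i = [x_{i−1/2}, x_{i+1/2})`, and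
`u^{n+1}_i = u^n_i − λ(F^n_{i+1/2}(u^n_i, u^n_{i+1}) − F^n_{i−1/2}(u^n_{i−1}, u^n_i))`
for `0 ≤ n < N`, where `λ = Δt/Δx`. -/
def SchemeHyp (f ν μ β : ℝ → ℝ) (u0 : ℝ → ℝ) (Δx Δt θ αc : ℝ) (N : ℕ)
    (u : ℕ → ℤ → ℝ) : Prop :=
  (∀ i : ℤ, u 0 i
      = (1 / Δx) * ∫ x in Set.Ico ((i : ℝ) * Δx - Δx / 2) ((i : ℝ) * Δx + Δx / 2), u0 x) ∧
  ∀ n < N, ∀ i : ℤ,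
    u (n + 1) i = u n i
      - (Δt / Δx) * (Fnum f ν μ β (Δt / Δx) θ Δx αc (u n) i (u n i) (u n (i + 1))
          - Fnum f ν μ β (Δt / Δx) θ Δx αc (u n) (i - 1) (u n (i - 1)) (u n i))

/-- Positivity of the scheme: with nonnegative initial data `u₀ ∈ (L¹ ∩ BV)(ℝ)`,
the finite volume approximations satisfy `u^n_i ≥ 0` for all `i ∈ ℤ`, `0 ≤ n ≤ N`. -/
theorem stmt2 (f ν β μ : ℝ → ℝ) (Lf : NNReal) (Mν : ℝ)
    (hf : LipschitzWith Lf f) (hf0 : f 0 = 0)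
    (hν : SmoothData ν) (hν0 : ν 0 = 0) (hνb : ∀ x, |ν x| ≤ Mν)
    (hβ : SmoothData β) (hβ0 : β 0 = 0)
    (hμ : SmoothData μ)
    (T Δx Δt θ αc : ℝ) (N : ℕ)
    (hΔx : 0 < Δx) (hΔt : 0 < Δt) (hT : 0 < T) (hTN : T = N * Δt)
    (hθ : θ ∈ Set.Ioo (0 : ℝ) (2 / 3)) (hαc : αc ∈ Set.Icc (0 : ℝ) 1)
    (hCFL : Δt / Δx ≤ min 1 (min (4 - 6 * θ) (6 * θ)) / (1 + 6 * (Lf : ℝ) * Mν))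
    (u0 : ℝ → ℝ) (hu0 : Integrable u0) (hu0bv : BoundedVariationOn u0 Set.univ)
    (hu0pos : ∀ x, 0 ≤ u0 x)
    (u : ℕ → ℤ → ℝ) (hu : SchemeHyp f ν μ β u0 Δx Δt θ αc N u) :
    ∀ n ≤ N, ∀ i : ℤ, 0 ≤ u n i := by
  obtain ⟨h0, hrec⟩ := hu
  have hMν : 0 ≤ Mν := le_trans (abs_nonneg _) (hνb 0)
  have hLf : (0:ℝ) ≤ Lf := Lf.coe_nonneg
  have hlam : 0 < Δt / Δx := div_pos hΔt hΔx
  have hD : (0:ℝ) < 1 + 6 * (Lf:ℝ) * Mν := by positivity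
  have hmin : (Δt / Δx) * (1 + 6 * (Lf:ℝ) * Mν) ≤ min 1 (min (4 - 6 * θ) (6 * θ)) := by
    rw [← le_div_iff₀ hD]; exact hCFL
  have h1 : (Δt / Δx) * ((Lf:ℝ) * Mν) ≤ θ := by
    have h := le_trans hmin (le_trans (min_le_right _ _) (min_le_right _ _))
    nlinarith [hlam.le]
  have h2 : (Δt / Δx) * ((Lf:ℝ) * Mν) ≤ 1 - θ := by
    have h := le_trans hmin (le_trans (min_le_right _ _) (min_le_left _ _))
    nlinarith [hlam.le]
  have hfabs : ∀ x : ℝ, 0 ≤ x → |f x| ≤ (Lf:ℝ) * x := by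
    intro x hx
    have h := hf.dist_le_mul x 0
    simpa [hf0, Real.dist_eq, abs_of_nonneg hx] using h
  intro n hn
  induction n with
  | zero =>
    intro i
    rw [h0 i]
    have hI : 0 ≤ ∫ x in Set.Ico ((i:ℝ)*Δx - Δx/2) ((i:ℝ)*Δx + Δx/2), u0 x :=
      setIntegral_nonneg measurableSet_Ico fun x _ => hu0pos x
    have : (0:ℝ) ≤ 1 / Δx := by positivity
    exact mul_nonneg this hI
  | succ n ih =>
    have hnN : n < N := lt_of_lt_of_le (Nat.lt_succ_self n) hn
    have ihp := ih (le_of_lt hnN)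
    intro i
    rw [hrec n hnN i]
    have ha := ihp i
    have hb := ihp (i+1)
    have hc := ihp (i-1)
    set a := u n i with hadef
    set b := u n (i+1) with hbdef
    set c := u n (i-1) with hcdef
    set νp := ν (cdisc μ β Δx αc (u n) i) with hp
    set νm := ν (cdisc μ β Δx αc (u n) (i-1)) with hm
    have hνp : |νp| ≤ Mν := hνb _
    have hνm : |νm| ≤ Mν := hνb _
    have hlne : (Δt / Δx) ≠ 0 := ne_of_gt hlam
    have key : a - (Δt / Δx) * (Fnum f ν μ β (Δt / Δx) θ Δx αc (u n) i a b
          - Fnum f ν μ β (Δt / Δx) θ Δx αc (u n) (i-1) c a)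
        = (1-θ)*a + (θ/2)*(b+c)
          + ((Δt / Δx)/2) * (νm*(f c + f a) - νp*(f a + f b)) := by
      simp only [Fnum, ← hp, ← hm]
      field_simp
      ring
    rw [key]
    have e1 : |νm * (f c + f a)| ≤ Mν * ((Lf:ℝ)*c + (Lf:ℝ)*a) := by
      rw [abs_mul]
      exact mul_le_mul hνm (le_trans (abs_add_le _ _)
        (add_le_add (hfabs c hc) (hfabs a ha))) (abs_nonneg _) hMν
    have e2 : |νp * (f a + f b)| ≤ Mν * ((Lf:ℝ)*a + (Lf:ℝ)*b) := by
      rw [abs_mul]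
      exact mul_le_mul hνp (le_trans (abs_add_le _ _)
        (add_le_add (hfabs a ha) (hfabs b hb))) (abs_nonneg _) hMν
    have t1 : 0 ≤ (θ - (Δt / Δx) * ((Lf:ℝ) * Mν)) * b :=
      mul_nonneg (sub_nonneg.2 h1) hb
    have t2 : 0 ≤ (θ - (Δt / Δx) * ((Lf:ℝ) * Mν)) * c :=
      mul_nonneg (sub_nonneg.2 h1) hc
    have t3 : 0 ≤ (1 - θ - (Δt / Δx) * ((Lf:ℝ) * Mν)) * a :=
      mul_nonneg (by linarith) ha
    have b1 : -(Mν * ((Lf:ℝ)*c + (Lf:ℝ)*a)) ≤ νm*(f c + f a) :=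
      le_trans (neg_le_neg e1) (neg_abs_le _)
    have b2 : νp*(f a + f b) ≤ Mν * ((Lf:ℝ)*a + (Lf:ℝ)*b) :=
      le_trans (le_abs_self _) e2
    have hX : -(Mν * ((Lf:ℝ)*c + (Lf:ℝ)*a)) - Mν * ((Lf:ℝ)*a + (Lf:ℝ)*b)
        ≤ νm*(f c + f a) - νp*(f a + f b) := by linarith
    have hX2 := mul_le_mul_of_nonneg_left hX (by positivity : (0:ℝ) ≤ (Δt / Δx)/2)
    have final : 0 ≤ (1-θ)*a + (θ/2)*(b+c)
        + ((Δt / Δx)/2) * (-(Mν * ((Lf:ℝ)*c + (Lf:ℝ)*a)) - Mν * ((Lf:ℝ)*a + (Lf:ℝ)*b)) := by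
      linarith only [t1, t2, t3]
    linarith only [hX2, final]
end

section
/- Assume the scheme setting with nonnegative initial data u₀ ∈ (L¹ ∩ BV)(ℝ). Then the discrete L¹ norm is conserved: Δx Σ_{i∈ℤ} |u^n_i| = Δx Σ_{i∈ℤ} |u⁰_i| for all 0 ≤ n ≤ N. -/
open MeasureTheory

set_option maxHeartbeats 1600000 in
/-- `L¹` conservation: `Δx Σ_i |u^n_i| = Δx Σ_i |u⁰_i|` for all `0 ≤ n ≤ N`. -/
theorem stmt4 (f ν β μ : ℝ → ℝ) (Lf : NNReal) (Mν : ℝ)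
    (hf : LipschitzWith Lf f) (hf0 : f 0 = 0)
    (hν : SmoothData ν) (hν0 : ν 0 = 0) (hνb : ∀ x, |ν x| ≤ Mν)
    (hβ : SmoothData β) (hβ0 : β 0 = 0)
    (hμ : SmoothData μ)
    (T Δx Δt θ αc : ℝ) (N : ℕ)
    (hΔx : 0 < Δx) (hΔt : 0 < Δt) (hT : 0 < T) (hTN : T = N * Δt)
    (hθ : θ ∈ Set.Ioo (0 : ℝ) (2 / 3)) (hαc : αc ∈ Set.Icc (0 : ℝ) 1)
    (hCFL : Δt / Δx ≤ min 1 (min (4 - 6 * θ) (6 * θ)) / (1 + 6 * (Lf : ℝ) * Mν))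
    (u0 : ℝ → ℝ) (hu0 : Integrable u0) (hu0bv : BoundedVariationOn u0 Set.univ)
    (hu0pos : ∀ x, 0 ≤ u0 x)
    (u : ℕ → ℤ → ℝ) (hu : SchemeHyp f ν μ β u0 Δx Δt θ αc N u) :
    ∀ n ≤ N, Δx * (∑' i : ℤ, |u n i|) = Δx * ∑' i : ℤ, |u 0 i| := by
  obtain ⟨hu0i, hrec⟩ := hu
  have hlam : 0 < Δt / Δx := div_pos hΔt hΔx
  set lam := Δt / Δx with hlamdef
  have hMν0 : 0 ≤ Mν := (abs_nonneg (ν 0)).trans (hνb 0)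
  have hLf0 : (0:ℝ) ≤ (Lf:ℝ) := Lf.coe_nonneg
  have hdpos : (0:ℝ) < 1 + 6 * (Lf:ℝ) * Mν := by positivity
  have hCFL' : lam * (1 + 6 * (Lf:ℝ) * Mν) ≤ min 1 (min (4 - 6 * θ) (6 * θ)) := by
    rw [← le_div_iff₀ hdpos]; exact hCFL
  have hK1 : lam * (Mν * (Lf:ℝ)) ≤ θ := by
    have h1 : min 1 (min (4 - 6*θ) (6*θ)) ≤ 6*θ := (min_le_right _ _).trans (min_le_right _ _)
    linarith [hCFL'.trans h1, hlam.le]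
  have hK2 : lam * (Mν * (Lf:ℝ)) ≤ 1 - θ := by
    have h1 : min 1 (min (4 - 6*θ) (6*θ)) ≤ 4 - 6*θ := (min_le_right _ _).trans (min_le_left _ _)
    linarith [hCFL'.trans h1, hlam.le, hθ.2]
  have hfb : ∀ x : ℝ, |f x| ≤ (Lf:ℝ) * |x| := by
    intro x
    have := hf.dist_le_mul x 0
    simpa [Real.dist_eq, hf0] using this
  -- base case facts
  have hnn0 : ∀ i, 0 ≤ u 0 i := by
    intro i
    rw [hu0i i]
    exact mul_nonneg (by positivity)
      (setIntegral_nonneg measurableSet_Ico fun x _ => hu0pos x)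
  have hsum0 : Summable (u 0) := by
    have hdisj : Pairwise (Function.onFun Disjoint fun i : ℤ =>
        Set.Ico ((i:ℝ)*Δx - Δx/2) ((i:ℝ)*Δx + Δx/2)) := by
      intro i j hij
      rw [Function.onFun, Set.Ico_disjoint_Ico]
      rcases lt_or_gt_of_ne hij with h | h
      · have hij' : (i:ℝ) + 1 ≤ j := by exact_mod_cast h
        refine (min_le_left _ _).trans (le_max_of_le_right ?_)
        nlinarith
      · have hij' : (j:ℝ) + 1 ≤ i := by exact_mod_cast h
        refine (min_le_right _ _).trans (le_max_of_le_left ?_)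
        nlinarith
    have hs := (MeasureTheory.hasSum_integral_iUnion
        (fun i : ℤ => measurableSet_Ico) hdisj hu0.integrableOn).summable
    exact ((hs.mul_left (1/Δx)).congr fun i => (hu0i i).symm)
  -- main induction
  have key : ∀ n ≤ N, (∀ i, 0 ≤ u n i) ∧ Summable (u n) ∧ (∑' i, u n i) = ∑' i, u 0 i := by
    intro n hn
    induction n with
    | zero => exact ⟨hnn0, hsum0, rfl⟩
    | succ n ih =>
      have hnN : n < N := lt_of_lt_of_le (Nat.lt_succ_self n) hn
      obtain ⟨hnn, hsum, hteq⟩ := ih hnN.le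
      set a := u n with ha
      set G := fun i : ℤ => Fnum f ν μ β lam θ Δx αc a i (a i) (a (i+1)) with hG
      have hGi : ∀ i : ℤ, G i
          = ν (cdisc μ β Δx αc a i) * (f (a i) + f (a (i+1))) / 2
            - θ * (a (i+1) - a i) / (2 * lam) := fun i => rfl
      have hGi' : ∀ i : ℤ, G (i-1)
          = ν (cdisc μ β Δx αc a (i-1)) * (f (a (i-1)) + f (a i)) / 2
            - θ * (a i - a (i-1)) / (2 * lam) := by
        intro i
        rw [hGi (i-1), sub_add_cancel]
      have hrec' : ∀ i, u (n+1) i = a i - lam * (G i - G (i-1)) := by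
        intro i
        have h2 : G (i-1) = Fnum f ν μ β lam θ Δx αc a (i-1) (a (i-1)) (a i) := by
          simp only [hG]
          rw [sub_add_cancel]
        rw [hrec n hnN i, h2]
      -- bounds on f at a j
      have hfa : ∀ j : ℤ, |f (a j)| ≤ (Lf:ℝ) * a j := by
        intro j
        have := hfb (a j)
        rwa [abs_of_nonneg (hnn j)] at this
      -- nonnegativity
      have hnn' : ∀ i, 0 ≤ u (n+1) i := by
        intro i
        rw [hrec' i, hGi, hGi']
        set ν1 := ν (cdisc μ β Δx αc a i)
        set ν2 := ν (cdisc μ β Δx αc a (i-1))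
        set p := a i
        set q := a (i+1)
        set r := a (i-1)
        have hp : 0 ≤ p := hnn i
        have hq : 0 ≤ q := hnn (i+1)
        have hr : 0 ≤ r := hnn (i-1)
        have hfp : |f p| ≤ (Lf:ℝ) * p := hfa i
        have hfq : |f q| ≤ (Lf:ℝ) * q := hfa (i+1)
        have hfr : |f r| ≤ (Lf:ℝ) * r := hfa (i-1)
        have hν1 : |ν1| ≤ Mν := hνb _
        have hν2 : |ν2| ≤ Mν := hνb _
        have hexp : p - lam * ((ν1 * (f p + f q) / 2 - θ * (q - p) / (2 * lam))
              - (ν2 * (f r + f p) / 2 - θ * (p - r) / (2 * lam)))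
            = (1-θ)*p + (θ/2)*q + (θ/2)*r
              - (lam/2) * (ν1 * (f p + f q) - ν2 * (f r + f p)) := by
          field_simp
          ring
        rw [hexp]
        have h1 : ν1 * (f p + f q) ≤ Mν * ((Lf:ℝ)*p + (Lf:ℝ)*q) := by
          calc ν1 * (f p + f q) ≤ |ν1 * (f p + f q)| := le_abs_self _
            _ = |ν1| * |f p + f q| := abs_mul _ _
            _ ≤ Mν * ((Lf:ℝ)*p + (Lf:ℝ)*q) :=
              mul_le_mul hν1 ((abs_add_le _ _).trans (add_le_add hfp hfq))
                (abs_nonneg _) hMν0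
        have h2 : -(Mν * ((Lf:ℝ)*r + (Lf:ℝ)*p)) ≤ ν2 * (f r + f p) := by
          have : |ν2 * (f r + f p)| ≤ Mν * ((Lf:ℝ)*r + (Lf:ℝ)*p) := by
            rw [abs_mul]
            exact mul_le_mul hν2 ((abs_add_le _ _).trans (add_le_add hfr hfp))
              (abs_nonneg _) hMν0
          linarith [neg_abs_le (ν2 * (f r + f p))]
        have t1 : 0 ≤ (θ - lam * (Mν * (Lf:ℝ))) * q := mul_nonneg (by linarith) hq
        have t2 : 0 ≤ (θ - lam * (Mν * (Lf:ℝ))) * r := mul_nonneg (by linarith) hr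
        have t3 : 0 ≤ ((1-θ) - lam * (Mν * (Lf:ℝ))) * p := mul_nonneg (by linarith) hp
        have t4 : (lam/2) * (ν1 * (f p + f q)) ≤ (lam/2) * (Mν * ((Lf:ℝ)*p + (Lf:ℝ)*q)) :=
          mul_le_mul_of_nonneg_left h1 (by positivity)
        have t5 : (lam/2) * (-(Mν * ((Lf:ℝ)*r + (Lf:ℝ)*p))) ≤ (lam/2) * (ν2 * (f r + f p)) :=
          mul_le_mul_of_nonneg_left h2 (by positivity)
        linarith [t1, t2, t3, t4, t5]
      -- summability of G
      have hfsum : Summable fun i : ℤ => |f (a i)| :=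
        Summable.of_nonneg_of_le (fun i => abs_nonneg _)
          (fun i => (hfb (a i))) (hsum.abs.mul_left (Lf:ℝ))
      have hfsum1 : Summable fun i : ℤ => |f (a (i+1))| :=
        (Equiv.addRight (1:ℤ)).summable_iff.mpr hfsum
      have hasum1 : Summable fun i : ℤ => |a (i+1)| :=
        (Equiv.addRight (1:ℤ)).summable_iff.mpr hsum.abs
      have hBsum : Summable fun i : ℤ =>
          Mν * (|f (a i)| + |f (a (i+1))|) / 2 + θ * (|a (i+1)| + |a i|) / (2*lam) :=
        (((hfsum.add hfsum1).mul_left Mν).div_const 2).add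
          (((hasum1.add hsum.abs).mul_left θ).div_const (2*lam))
      have hGsum : Summable G := by
        rw [← summable_abs_iff]
        refine Summable.of_nonneg_of_le (fun i => abs_nonneg _) ?_ hBsum
        intro i
        rw [hGi i]
        refine (abs_sub _ _).trans (add_le_add ?_ ?_)
        · rw [abs_div, abs_mul, abs_two]
          gcongr
          · exact hνb _
          · exact abs_add_le _ _
        · rw [abs_div, abs_mul, abs_of_pos (by positivity : (0:ℝ) < 2*lam),
            abs_of_pos hθ.1]
          gcongr
          · exact hθ.1.le
          · exact abs_sub _ _
      have hGsum' : Summable fun i : ℤ => G (i-1) :=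
        (Equiv.subRight (1:ℤ)).summable_iff.mpr hGsum
      have hsum' : Summable (u (n+1)) := by
        refine Summable.congr ?_ (fun i => (hrec' i).symm)
        exact hsum.sub ((hGsum.sub hGsum').mul_left lam)
      have hshift : (∑' i : ℤ, G (i-1)) = ∑' i : ℤ, G i := by
        simpa using (Equiv.subRight (1:ℤ)).tsum_eq G
      have hteq' : (∑' i, u (n+1) i) = ∑' i, u 0 i := by
        calc (∑' i, u (n+1) i) = ∑' i, (a i - lam * (G i - G (i-1))) := tsum_congr hrec'
          _ = (∑' i, a i) - lam * ((∑' i, G i) - ∑' i : ℤ, G (i-1)) := by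
            rw [Summable.tsum_sub hsum ((hGsum.sub hGsum').mul_left lam), tsum_mul_left,
              Summable.tsum_sub hGsum hGsum']
          _ = ∑' i, a i := by rw [hshift]; ring
          _ = ∑' i, u 0 i := hteq
      exact ⟨hnn', hsum', hteq'⟩
  intro n hn
  obtain ⟨hnn, hsum, hteq⟩ := key n hn
  have e1 : (∑' i : ℤ, |u n i|) = ∑' i, u n i :=
    tsum_congr fun i => abs_of_nonneg (hnn i)
  have e2 : (∑' i : ℤ, |u 0 i|) = ∑' i, u 0 i :=
    tsum_congr fun i => abs_of_nonneg (hnn0 i)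
  rw [e1, e2, hteq]
end

section
/- Assume the scheme setting with nonnegative initial data u₀ ∈ (L¹ ∩ BV)(ℝ). Then there exists a constant L₂ > 0, depending only on f, ν, β, μ, ‖u₀‖_{L¹(ℝ)} and T but not on Δx or Δt, such that the discrete total variation satisfies Σ_{i∈ℤ} |u^n_{i+1} − u^n_i| ≤ exp(L₂ T) ( Σ_{i∈ℤ} |u⁰_{i+1} − u⁰_i| + L₂ ) for all 0 ≤ n ≤ N. -/
open MeasureTheory

lemma shift_summable {w : ℤ → ℝ} (hw : Summable w) (k : ℤ) :
    Summable (fun i => w (i + k)) :=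
  ((Equiv.addRight k).summable_iff (f := w)).2 hw

lemma shift_tsum (w : ℤ → ℝ) (k : ℤ) : ∑' i, w (i + k) = ∑' i, w i :=
  (Equiv.addRight k).tsum_eq w

lemma taylor_lip {g : ℝ → ℝ} (hg : Differentiable ℝ g) {L : NNReal}
    (hL : LipschitzWith L (deriv g)) (x y : ℝ) :
    |g y - g x - (y - x) * deriv g x| ≤ L * (y - x) ^ 2 := by
  have hconv : Convex ℝ (Set.uIcc x y) := convex_uIcc x y
  have key := hconv.norm_image_sub_le_of_norm_hasDerivWithin_le
    (f := fun t => g t - deriv g x * t) (f' := fun t => deriv g t - deriv g x)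
    (C := L * |y - x|)
    (fun t _ => by
      have := ((hg t).hasDerivAt.sub ((hasDerivAt_id t).const_mul (deriv g x))).hasDerivWithinAt
        (s := Set.uIcc x y)
      rw [mul_one] at this; exact this)
    (fun t ht => by
      have h1 : |deriv g t - deriv g x| ≤ L * |t - x| := by
        simpa [Real.dist_eq] using hL.dist_le_mul t x
      have h2 : |t - x| ≤ |y - x| := by
        rcases Set.mem_uIcc.1 ht with ht | ht <;> rcases ht with ⟨h3, h4⟩ <;>
          rw [abs_sub_le_iff] <;> constructor <;>
          cases abs_cases (y - x) <;> linarith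
      have : (L:ℝ) * |t - x| ≤ L * |y - x| := by
        have := L.2; exact mul_le_mul_of_nonneg_left h2 (by exact_mod_cast this)
      calc ‖deriv g t - deriv g x‖ = |deriv g t - deriv g x| := rfl
        _ ≤ L * |t - x| := h1
        _ ≤ L * |y - x| := this)
    Set.left_mem_uIcc Set.right_mem_uIcc
  have h3 : ‖(g y - deriv g x * y) - (g x - deriv g x * x)‖ ≤ (L * |y - x|) * ‖y - x‖ := key
  have h4 : |g y - g x - (y - x) * deriv g x| = ‖(g y - deriv g x * y) - (g x - deriv g x * x)‖ := by
    rw [Real.norm_eq_abs]; ring_nf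
  rw [h4]
  have h5 : (L:ℝ) * |y - x| * ‖y - x‖ = L * (y - x) ^ 2 := by
    rw [Real.norm_eq_abs, mul_assoc, abs_mul_abs_self]; ring
  linarith [h3, h5.le, h5.ge]

lemma secdiff_lip {g : ℝ → ℝ} (hg : Differentiable ℝ g) {L : NNReal}
    (hL : LipschitzWith L (deriv g)) (x h : ℝ) :
    |g (x + h) - 2 * g x + g (x - h)| ≤ 2 * L * h ^ 2 := by
  have t1 := taylor_lip hg hL x (x + h)
  have t2 := taylor_lip hg hL x (x - h)
  have e1 : (x + h - x) = h := by ring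
  have e2 : (x - h - x) = -h := by ring
  rw [e1] at t1; rw [e2] at t2
  have : g (x + h) - 2 * g x + g (x - h)
      = (g (x + h) - g x - h * deriv g x) + (g (x - h) - g x - (-h) * deriv g x) := by ring
  rw [this]
  calc |_ + _| ≤ |g (x + h) - g x - h * deriv g x| + |g (x - h) - g x - (-h) * deriv g x| :=
        abs_add_le _ _
    _ ≤ L * h ^ 2 + L * (-h) ^ 2 := add_le_add t1 t2
    _ = 2 * L * h ^ 2 := by ring

noncomputable def bfun (β : ℝ → ℝ) (αc : ℝ) (w : ℤ → ℝ) (p : ℤ) : ℝ :=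
  β (αc * w p + (1 - αc) * w (p + 1))

noncomputable def gfun (αc : ℝ) (w : ℤ → ℝ) (p : ℤ) : ℝ :=
  αc * w p + (1 - αc) * w (p + 1)

lemma gfun_summable {w : ℤ → ℝ} (hw : Summable w) (αc : ℝ) :
    Summable (gfun αc w) := by
  have h1 : Summable (fun p : ℤ => w (p + 1)) := shift_summable hw 1
  exact ((hw.mul_left αc).add (h1.mul_left (1 - αc)))

lemma gfun_tsum {w : ℤ → ℝ} (hw : Summable w) (αc : ℝ) :
    ∑' p, gfun αc w p = ∑' p, w p := by
  have h1 : Summable (fun p : ℤ => w (p + 1)) := shift_summable hw 1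
  unfold gfun
  rw [Summable.tsum_add (hw.mul_left αc) (h1.mul_left (1 - αc)), tsum_mul_left, tsum_mul_left,
    shift_tsum w 1]
  ring

lemma gfun_nonneg {w : ℤ → ℝ} (hwpos : ∀ i, 0 ≤ w i) {αc : ℝ} (hα0 : 0 ≤ αc)
    (hα1 : αc ≤ 1) (p : ℤ) : 0 ≤ gfun αc w p := by
  have := hwpos p; have := hwpos (p + 1)
  have : 0 ≤ 1 - αc := by linarith
  unfold gfun; positivity

lemma bfun_abs_le {β : ℝ → ℝ} {Lβ : ℝ}
    (hβlip : ∀ x y, |β x - β y| ≤ Lβ * |x - y|) (hβ0 : β 0 = 0)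
    {αc : ℝ} {w : ℤ → ℝ} (hwpos : ∀ i, 0 ≤ w i) (hα0 : 0 ≤ αc) (hα1 : αc ≤ 1) (p : ℤ) :
    |bfun β αc w p| ≤ Lβ * gfun αc w p := by
  have h := hβlip (αc * w p + (1 - αc) * w (p + 1)) 0
  rw [hβ0, sub_zero, sub_zero] at h
  have h2 : |αc * w p + (1 - αc) * w (p + 1)| = gfun αc w p :=
    abs_of_nonneg (gfun_nonneg hwpos hα0 hα1 p)
  rw [h2] at h
  exact h

/-- Generic weighted-sum bound over the `bfun` sequence. -/
lemma wsum {β : ℝ → ℝ} {Lβ : ℝ} (hLβ : 0 ≤ Lβ)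
    (hβlip : ∀ x y, |β x - β y| ≤ Lβ * |x - y|) (hβ0 : β 0 = 0)
    {αc : ℝ} {w : ℤ → ℝ} (hw : Summable w) (hwpos : ∀ i, 0 ≤ w i)
    (hα0 : 0 ≤ αc) (hα1 : αc ≤ 1)
    (m : ℤ → ℝ) (B : ℝ) (hB : 0 ≤ B) (hm : ∀ p, |m p| ≤ B) :
    Summable (fun p => m p * bfun β αc w p) ∧
      |∑' p, m p * bfun β αc w p| ≤ B * Lβ * ∑' p, w p := by
  have hg := gfun_summable hw αc
  have hdom : ∀ p, ‖m p * bfun β αc w p‖ ≤ B * Lβ * gfun αc w p := by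
    intro p
    rw [Real.norm_eq_abs, abs_mul]
    calc |m p| * |bfun β αc w p| ≤ B * (Lβ * gfun αc w p) := by
          apply mul_le_mul (hm p) (bfun_abs_le hβlip hβ0 hwpos hα0 hα1 p) (abs_nonneg _) hB
      _ = B * Lβ * gfun αc w p := by ring
  have hsum : Summable (fun p => m p * bfun β αc w p) :=
    Summable.of_norm_bounded (hg.mul_left (B * Lβ)) hdom
  refine ⟨hsum, ?_⟩
  calc |∑' p, m p * bfun β αc w p| ≤ ∑' p, ‖m p * bfun β αc w p‖ := by
        rw [← Real.norm_eq_abs]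
        exact norm_tsum_le_tsum_norm (by simpa only [Real.norm_eq_abs] using hsum.abs)
    _ ≤ ∑' p, B * Lβ * gfun αc w p := Summable.tsum_le_tsum hdom
        (by simpa only [Real.norm_eq_abs] using hsum.abs) (hg.mul_left (B * Lβ))
    _ = B * Lβ * ∑' p, gfun αc w p := tsum_mul_left
    _ = B * Lβ * ∑' p, w p := by rw [gfun_tsum hw]

lemma cdisc_eq (μ β : ℝ → ℝ) (Δx αc : ℝ) (w : ℤ → ℝ) (i : ℤ) :
    cdisc μ β Δx αc w i
      = Δx * ∑' p, μ (((i - p : ℤ) : ℝ) * Δx + Δx / 2) * bfun β αc w p := rfl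

section Cfacts

variable {μ β : ℝ → ℝ} {Lβ Mμ Lμ : ℝ} {αc Δx : ℝ} {w : ℤ → ℝ}

lemma cdisc_first_diff (hLβ : 0 ≤ Lβ)
    (hβlip : ∀ x y, |β x - β y| ≤ Lβ * |x - y|) (hβ0 : β 0 = 0)
    (hμb : ∀ x, |μ x| ≤ Mμ) (hμlip : ∀ x y, |μ x - μ y| ≤ Lμ * |x - y|)
    (hw : Summable w) (hwpos : ∀ i, 0 ≤ w i) (hα0 : 0 ≤ αc) (hα1 : αc ≤ 1)
    (hΔx : 0 < Δx) (i : ℤ) :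
    |cdisc μ β Δx αc w (i + 1) - cdisc μ β Δx αc w i|
      ≤ Lμ * Lβ * Δx ^ 2 * ∑' p, w p := by
  have hMμ : 0 ≤ Mμ := le_trans (abs_nonneg _) (hμb 0)
  have hLμ : 0 ≤ Lμ := by
    have := hμlip 1 0
    have h2 : (0:ℝ) ≤ |μ 1 - μ 0| := abs_nonneg _
    simp only [sub_zero, abs_one, mul_one] at this
    linarith
  have hA := wsum hLβ hβlip hβ0 hw hwpos hα0 hα1
    (fun p => μ (((i + 1 - p : ℤ) : ℝ) * Δx + Δx / 2)) Mμ hMμ (fun p => hμb _)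
  have hB := wsum hLβ hβlip hβ0 hw hwpos hα0 hα1
    (fun p => μ (((i - p : ℤ) : ℝ) * Δx + Δx / 2)) Mμ hMμ (fun p => hμb _)
  have hm : ∀ p : ℤ, |μ (((i + 1 - p : ℤ) : ℝ) * Δx + Δx / 2)
      - μ (((i - p : ℤ) : ℝ) * Δx + Δx / 2)| ≤ Lμ * Δx := by
    intro p
    have := hμlip (((i + 1 - p : ℤ) : ℝ) * Δx + Δx / 2) (((i - p : ℤ) : ℝ) * Δx + Δx / 2)
    have he : (((i + 1 - p : ℤ) : ℝ) * Δx + Δx / 2) - (((i - p : ℤ) : ℝ) * Δx + Δx / 2) = Δx := by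
      push_cast; ring
    rw [he, abs_of_pos hΔx] at this
    exact this
  have hC := wsum hLβ hβlip hβ0 hw hwpos hα0 hα1
    (fun p => μ (((i + 1 - p : ℤ) : ℝ) * Δx + Δx / 2) - μ (((i - p : ℤ) : ℝ) * Δx + Δx / 2))
    (Lμ * Δx) (by positivity) hm
  have key : cdisc μ β Δx αc w (i + 1) - cdisc μ β Δx αc w i
      = Δx * ∑' p, (μ (((i + 1 - p : ℤ) : ℝ) * Δx + Δx / 2)
          - μ (((i - p : ℤ) : ℝ) * Δx + Δx / 2)) * bfun β αc w p := by
    rw [cdisc_eq, cdisc_eq, ← mul_sub, ← Summable.tsum_sub hA.1 hB.1]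
    congr 1
    apply tsum_congr
    intro p
    ring
  rw [key, abs_mul, abs_of_pos hΔx]
  calc Δx * |∑' p, _| ≤ Δx * (Lμ * Δx * Lβ * ∑' p, w p) := by
        apply mul_le_mul_of_nonneg_left hC.2 hΔx.le
    _ = Lμ * Lβ * Δx ^ 2 * ∑' p, w p := by ring

lemma cdisc_sec_diff (hLβ : 0 ≤ Lβ)
    (hβlip : ∀ x y, |β x - β y| ≤ Lβ * |x - y|) (hβ0 : β 0 = 0)
    (hμb : ∀ x, |μ x| ≤ Mμ) (hμd : Differentiable ℝ μ) {Lμ' : NNReal}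
    (hμd' : LipschitzWith Lμ' (deriv μ))
    (hw : Summable w) (hwpos : ∀ i, 0 ≤ w i) (hα0 : 0 ≤ αc) (hα1 : αc ≤ 1)
    (hΔx : 0 < Δx) (i : ℤ) :
    |cdisc μ β Δx αc w (i + 1) - 2 * cdisc μ β Δx αc w i + cdisc μ β Δx αc w (i - 1)|
      ≤ 2 * Lμ' * Lβ * Δx ^ 3 * ∑' p, w p := by
  have hMμ : 0 ≤ Mμ := le_trans (abs_nonneg _) (hμb 0)
  have hA := wsum hLβ hβlip hβ0 hw hwpos hα0 hα1
    (fun p => μ (((i + 1 - p : ℤ) : ℝ) * Δx + Δx / 2)) Mμ hMμ (fun p => hμb _)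
  have hB := wsum hLβ hβlip hβ0 hw hwpos hα0 hα1
    (fun p => μ (((i - p : ℤ) : ℝ) * Δx + Δx / 2)) Mμ hMμ (fun p => hμb _)
  have hB2 := wsum hLβ hβlip hβ0 hw hwpos hα0 hα1
    (fun p => 2 * μ (((i - p : ℤ) : ℝ) * Δx + Δx / 2)) (2 * Mμ) (by positivity)
    (fun p => by rw [abs_mul, abs_two]; exact mul_le_mul_of_nonneg_left (hμb _) (by norm_num))
  have hD := wsum hLβ hβlip hβ0 hw hwpos hα0 hα1
    (fun p => μ (((i - 1 - p : ℤ) : ℝ) * Δx + Δx / 2)) Mμ hMμ (fun p => hμb _)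
  have hm : ∀ p : ℤ, |μ (((i + 1 - p : ℤ) : ℝ) * Δx + Δx / 2)
      - 2 * μ (((i - p : ℤ) : ℝ) * Δx + Δx / 2) + μ (((i - 1 - p : ℤ) : ℝ) * Δx + Δx / 2)|
      ≤ 2 * Lμ' * Δx ^ 2 := by
    intro p
    have h := secdiff_lip hμd hμd' (((i - p : ℤ) : ℝ) * Δx + Δx / 2) Δx
    have e1 : (((i - p : ℤ) : ℝ) * Δx + Δx / 2) + Δx = ((i + 1 - p : ℤ) : ℝ) * Δx + Δx / 2 := by
      push_cast; ring
    have e2 : (((i - p : ℤ) : ℝ) * Δx + Δx / 2) - Δx = ((i - 1 - p : ℤ) : ℝ) * Δx + Δx / 2 := by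
      push_cast; ring
    rw [e1, e2] at h
    exact h
  have hC := wsum hLβ hβlip hβ0 hw hwpos hα0 hα1
    (fun p => μ (((i + 1 - p : ℤ) : ℝ) * Δx + Δx / 2)
      - 2 * μ (((i - p : ℤ) : ℝ) * Δx + Δx / 2) + μ (((i - 1 - p : ℤ) : ℝ) * Δx + Δx / 2))
    (2 * Lμ' * Δx ^ 2) (by positivity) hm
  have key : cdisc μ β Δx αc w (i + 1) - 2 * cdisc μ β Δx αc w i + cdisc μ β Δx αc w (i - 1)
      = Δx * ∑' p, (μ (((i + 1 - p : ℤ) : ℝ) * Δx + Δx / 2)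
          - 2 * μ (((i - p : ℤ) : ℝ) * Δx + Δx / 2)
          + μ (((i - 1 - p : ℤ) : ℝ) * Δx + Δx / 2)) * bfun β αc w p := by
    rw [cdisc_eq, cdisc_eq, cdisc_eq]
    have e : ∀ p : ℤ, (μ (((i + 1 - p : ℤ) : ℝ) * Δx + Δx / 2)
          - 2 * μ (((i - p : ℤ) : ℝ) * Δx + Δx / 2)
          + μ (((i - 1 - p : ℤ) : ℝ) * Δx + Δx / 2)) * bfun β αc w p
        = (μ (((i + 1 - p : ℤ) : ℝ) * Δx + Δx / 2) * bfun β αc w p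
            - (2 * μ (((i - p : ℤ) : ℝ) * Δx + Δx / 2)) * bfun β αc w p)
          + μ (((i - 1 - p : ℤ) : ℝ) * Δx + Δx / 2) * bfun β αc w p := by
      intro p; ring
    rw [tsum_congr e, Summable.tsum_add (hA.1.sub hB2.1) hD.1, Summable.tsum_sub hA.1 hB2.1]
    have e2 : ∀ p : ℤ, (2 * μ (((i - p : ℤ) : ℝ) * Δx + Δx / 2)) * bfun β αc w p
        = 2 * (μ (((i - p : ℤ) : ℝ) * Δx + Δx / 2) * bfun β αc w p) := fun p => by ring
    rw [tsum_congr e2, tsum_mul_left]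
    ring
  rw [key, abs_mul, abs_of_pos hΔx]
  calc Δx * |∑' p, _| ≤ Δx * (2 * Lμ' * Δx ^ 2 * Lβ * ∑' p, w p) := by
        apply mul_le_mul_of_nonneg_left hC.2 hΔx.le
    _ = 2 * Lμ' * Lβ * Δx ^ 3 * ∑' p, w p := by ring

end Cfacts

lemma nu_secdiff {ν : ℝ → ℝ} (hνd : Differentiable ℝ ν) {Lν' : NNReal}
    (hν' : LipschitzWith Lν' (deriv ν)) {Mν' : ℝ} (hb : ∀ x, |deriv ν x| ≤ Mν')
    (c₀ c₁ c₂ : ℝ) :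
    |ν c₂ - 2 * ν c₁ + ν c₀|
      ≤ Lν' * ((c₂ - c₁) ^ 2 + (c₀ - c₁) ^ 2) + Mν' * |c₂ - 2 * c₁ + c₀| := by
  have t2 := taylor_lip hνd hν' c₁ c₂
  have t0 := taylor_lip hνd hν' c₁ c₀
  have key : ν c₂ - 2 * ν c₁ + ν c₀
      = (ν c₂ - ν c₁ - (c₂ - c₁) * deriv ν c₁) + (ν c₀ - ν c₁ - (c₀ - c₁) * deriv ν c₁)
        + (c₂ - 2 * c₁ + c₀) * deriv ν c₁ := by ring
  rw [key]
  calc |_| ≤ |(ν c₂ - ν c₁ - (c₂ - c₁) * deriv ν c₁) + (ν c₀ - ν c₁ - (c₀ - c₁) * deriv ν c₁)|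
        + |(c₂ - 2 * c₁ + c₀) * deriv ν c₁| := abs_add_le _ _
    _ ≤ (|ν c₂ - ν c₁ - (c₂ - c₁) * deriv ν c₁| + |ν c₀ - ν c₁ - (c₀ - c₁) * deriv ν c₁|)
        + |c₂ - 2 * c₁ + c₀| * |deriv ν c₁| := by
          refine add_le_add (abs_add_le _ _) ?_
          rw [abs_mul]
    _ ≤ (Lν' * (c₂ - c₁) ^ 2 + Lν' * (c₀ - c₁) ^ 2) + |c₂ - 2 * c₁ + c₀| * Mν' := by
          refine add_le_add (add_le_add t2 t0) ?_
          exact mul_le_mul_of_nonneg_left (hb c₁) (abs_nonneg _)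
    _ = Lν' * ((c₂ - c₁) ^ 2 + (c₀ - c₁) ^ 2) + Mν' * |c₂ - 2 * c₁ + c₀| := by ring

lemma shift_summable' {w : ℤ → ℝ} (hw : Summable w) (k : ℤ) :
    Summable (fun i => w (i - k)) :=
  ((Equiv.subRight k).summable_iff (f := w)).2 hw

lemma shift_tsum' (w : ℤ → ℝ) (k : ℤ) : ∑' i, w (i - k) = ∑' i, w i :=
  (Equiv.subRight k).tsum_eq w

lemma abs_pair (X q : ℝ) (h : |q| ≤ |X|) : |X - q| + |X + q| ≤ 2 * |X| := by
  rcases abs_cases (X - q) with ⟨h1, _⟩ | ⟨h1, _⟩ <;>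
    rcases abs_cases (X + q) with ⟨h2, _⟩ | ⟨h2, _⟩ <;>
    rcases abs_cases q with ⟨h3, h3'⟩ | ⟨h3, h3'⟩ <;>
    rcases abs_cases X with ⟨h4, h4'⟩ | ⟨h4, h4'⟩ <;> linarith
-- core TV lemma (appended after testing)
set_option maxHeartbeats 1000000 in
lemma tv_core
    (nu a w v b v' : ℤ → ℝ)
    (θ lam Lf Mν D1 D2 S TV : ℝ)
    (hθ0 : 0 < θ) (hθ1 : θ < 2 / 3) (hlam : 0 < lam)
    (hLf : 0 ≤ Lf) (hMν : 0 ≤ Mν) (hD1 : 0 ≤ D1) (hD2 : 0 ≤ D2)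
    (hcfl : lam * (Lf * Mν) ≤ θ)
    (hw : Summable w) (hwpos : ∀ i, 0 ≤ w i) (hS : ∑' i, w i = S)
    (hvdef : ∀ i, v i = w (i + 1) - w i)
    (hbdef : ∀ i, b i = a (i + 1) - a i)
    (ha : ∀ i, |a i| ≤ Lf * w i)
    (hbv : ∀ i, |b i| ≤ Lf * |v i|)
    (hnub : ∀ i, |nu i| ≤ Mν)
    (hnu1 : ∀ i, |nu (i + 1) - nu i| ≤ D1)
    (hnu2 : ∀ i, |nu (i + 1) - 2 * nu i + nu (i - 1)| ≤ D2)
    (sv' : Summable v')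
    (hII : ∀ i, v' i = (1 - θ) * v i
        + (θ / 2 * v (i + 1) - lam / 2 * nu i * b (i + 1))
        + (θ / 2 * v (i - 1) + lam / 2 * nu i * b (i - 1))
        - lam / 2 * ((nu (i + 1) - 2 * nu i + nu (i - 1)) * (a (i + 1) + a (i + 2))
            + (nu i - nu (i - 1)) * (b (i - 1) + 2 * b i + b (i + 1))))
    (hTV : ∑' i, |v i| = TV) :
    ∑' i, |v' i| ≤ (1 + lam * Lf * (3 * D1)) * TV + lam * Lf * D2 * S := by
  have hS0 : 0 ≤ S := hS ▸ tsum_nonneg hwpos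
  have hTV0 : 0 ≤ TV := hTV ▸ tsum_nonneg (fun i => abs_nonneg _)
  -- summabilities
  have sv : Summable v := by
    apply Summable.congr ((shift_summable hw 1).sub hw)
    intro i; rw [hvdef i]
  have svabs : Summable (fun i => |v i|) := sv.abs
  have sa : Summable a := by
    apply Summable.of_norm_bounded (hw.mul_left Lf)
    intro i; rw [Real.norm_eq_abs]; exact ha i
  have saabs : Summable (fun i => |a i|) := sa.abs
  have sb : Summable b := by
    apply Summable.congr ((shift_summable sa 1).sub sa)
    intro i; rw [hbdef i]
  have sbabs : Summable (fun i => |b i|) := sb.abs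
  -- named pieces
  set P : ℤ → ℝ := fun i => |θ / 2 * v (i + 1) - lam / 2 * nu i * b (i + 1)| with hP
  set Q : ℤ → ℝ := fun i => |θ / 2 * v (i - 1) + lam / 2 * nu i * b (i - 1)| with hQ
  set E : ℤ → ℝ := fun i =>
    lam / 2 * ((nu (i + 1) - 2 * nu i + nu (i - 1)) * (a (i + 1) + a (i + 2))
      + (nu i - nu (i - 1)) * (b (i - 1) + 2 * b i + b (i + 1))) with hE
  have hnu1' : ∀ i : ℤ, |nu i - nu (i - 1)| ≤ D1 := by
    intro i
    have := hnu1 (i - 1)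
    simpa using this
  -- pointwise bound on P
  have hPb : ∀ i, P i ≤ (θ / 2 + lam / 2 * Mν * Lf) * |v (i + 1)| := by
    intro i
    calc P i ≤ |θ / 2 * v (i + 1)| + |lam / 2 * nu i * b (i + 1)| := abs_sub _ _
      _ ≤ θ / 2 * |v (i + 1)| + lam / 2 * Mν * (Lf * |v (i + 1)|) := by
          rw [abs_mul, abs_mul, abs_mul]
          refine add_le_add (by rw [abs_of_pos (by positivity : (0:ℝ) < θ/2)]) ?_
          rw [abs_of_pos (by positivity : (0:ℝ) < lam/2)]
          have h1 := hnub i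
          have h2 := hbv (i + 1)
          have := mul_le_mul (mul_le_mul_of_nonneg_left h1 (by positivity : (0:ℝ) ≤ lam/2))
            h2 (abs_nonneg _) (by positivity)
          calc lam / 2 * |nu i| * |b (i + 1)| ≤ lam / 2 * Mν * (Lf * |v (i + 1)|) := this
            _ = lam / 2 * Mν * (Lf * |v (i + 1)|) := rfl
      _ = (θ / 2 + lam / 2 * Mν * Lf) * |v (i + 1)| := by ring
  have hQb : ∀ i, Q i ≤ (θ / 2 + lam / 2 * Mν * Lf) * |v (i - 1)| := by
    intro i
    calc Q i ≤ |θ / 2 * v (i - 1)| + |lam / 2 * nu i * b (i - 1)| := abs_add_le _ _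
      _ ≤ θ / 2 * |v (i - 1)| + lam / 2 * Mν * (Lf * |v (i - 1)|) := by
          rw [abs_mul, abs_mul, abs_mul]
          refine add_le_add (by rw [abs_of_pos (by positivity : (0:ℝ) < θ/2)]) ?_
          rw [abs_of_pos (by positivity : (0:ℝ) < lam/2)]
          exact mul_le_mul (mul_le_mul_of_nonneg_left (hnub i)
            (by positivity : (0:ℝ) ≤ lam/2)) (hbv (i - 1)) (abs_nonneg _) (by positivity)
      _ = (θ / 2 + lam / 2 * Mν * Lf) * |v (i - 1)| := by ring
  have sP : Summable P := by
    apply Summable.of_norm_bounded ((shift_summable svabs 1).mul_left (θ / 2 + lam / 2 * Mν * Lf))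
    intro i
    rw [Real.norm_eq_abs, abs_of_nonneg (abs_nonneg _)]
    exact hPb i
  have sQ : Summable Q := by
    apply Summable.of_norm_bounded ((shift_summable' svabs 1).mul_left (θ / 2 + lam / 2 * Mν * Lf))
    intro i
    rw [Real.norm_eq_abs, abs_of_nonneg (abs_nonneg _)]
    exact hQb i
  -- pointwise bound on |E|
  have hEb : ∀ i, |E i| ≤ lam / 2 * (D2 * (|a (i + 1)| + |a (i + 2)|))
      + lam / 2 * (D1 * (|b (i - 1)| + 2 * |b i| + |b (i + 1)|)) := by
    intro i
    have h1 : |E i| ≤ lam / 2 * (|nu (i + 1) - 2 * nu i + nu (i - 1)| * (|a (i + 1)| + |a (i + 2)|)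
        + |nu i - nu (i - 1)| * (|b (i - 1)| + 2 * |b i| + |b (i + 1)|)) := by
      rw [hE]
      simp only []
      rw [abs_mul, abs_of_pos (by positivity : (0:ℝ) < lam / 2)]
      apply mul_le_mul_of_nonneg_left _ (by positivity : (0:ℝ) ≤ lam / 2)
      calc |_| ≤ |(nu (i + 1) - 2 * nu i + nu (i - 1)) * (a (i + 1) + a (i + 2))|
            + |(nu i - nu (i - 1)) * (b (i - 1) + 2 * b i + b (i + 1))| := abs_add_le _ _
        _ ≤ _ := by
            rw [abs_mul, abs_mul]
            refine add_le_add (mul_le_mul_of_nonneg_left ?_ (abs_nonneg _))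
              (mul_le_mul_of_nonneg_left ?_ (abs_nonneg _))
            · exact (abs_add_le _ _)
            · calc |b (i - 1) + 2 * b i + b (i + 1)|
                  ≤ |b (i - 1) + 2 * b i| + |b (i + 1)| := abs_add_le _ _
                _ ≤ |b (i - 1)| + |2 * b i| + |b (i + 1)| := by
                    refine add_le_add_left (abs_add_le _ _) _
                _ = |b (i - 1)| + 2 * |b i| + |b (i + 1)| := by rw [abs_mul, abs_two]
    refine h1.trans ?_
    have h2 := hnu2 i
    have h3 := hnu1' i
    have e1 : (0:ℝ) ≤ |a (i + 1)| + |a (i + 2)| := by positivity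
    have e2 : (0:ℝ) ≤ |b (i - 1)| + 2 * |b i| + |b (i + 1)| := by positivity
    have := add_le_add (mul_le_mul_of_nonneg_right h2 e1) (mul_le_mul_of_nonneg_right h3 e2)
    nlinarith [hlam.le]
  have sEdom : Summable (fun i => lam / 2 * (D2 * (|a (i + 1)| + |a (i + 2)|))
      + lam / 2 * (D1 * (|b (i - 1)| + 2 * |b i| + |b (i + 1)|))) := by
    apply Summable.add
    · exact (((shift_summable saabs 1).add (shift_summable saabs 2)).mul_left D2).mul_left (lam / 2)
    · exact ((((shift_summable' sbabs 1).add (sbabs.mul_left 2)).add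
        (shift_summable sbabs 1)).mul_left D1).mul_left (lam / 2)
  have sEabs : Summable (fun i => |E i|) := by
    apply Summable.of_norm_bounded sEdom
    intro i
    rw [Real.norm_eq_abs, abs_of_nonneg (abs_nonneg _)]
    exact hEb i
  -- pointwise bound on |v'|
  have step1 : ∀ i, |v' i| ≤ (1 - θ) * |v i| + P i + Q i + |E i| := by
    intro i
    have h0 : v' i = (1 - θ) * v i
        + (θ / 2 * v (i + 1) - lam / 2 * nu i * b (i + 1))
        + (θ / 2 * v (i - 1) + lam / 2 * nu i * b (i - 1)) - E i := by
      simp only [hE]; exact hII i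
    rw [h0]
    have t1 : |(1 - θ) * v i| = (1 - θ) * |v i| := by
      rw [abs_mul, abs_of_nonneg (by linarith : (0:ℝ) ≤ 1 - θ)]
    calc |(1 - θ) * v i + (θ / 2 * v (i + 1) - lam / 2 * nu i * b (i + 1))
          + (θ / 2 * v (i - 1) + lam / 2 * nu i * b (i - 1)) - E i|
        ≤ |(1 - θ) * v i + (θ / 2 * v (i + 1) - lam / 2 * nu i * b (i + 1))
          + (θ / 2 * v (i - 1) + lam / 2 * nu i * b (i - 1))| + |E i| := abs_sub _ _
      _ ≤ |(1 - θ) * v i + (θ / 2 * v (i + 1) - lam / 2 * nu i * b (i + 1))|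
          + |θ / 2 * v (i - 1) + lam / 2 * nu i * b (i - 1)| + |E i| := by
          exact add_le_add_left (abs_add_le _ _) _
      _ ≤ |(1 - θ) * v i| + |θ / 2 * v (i + 1) - lam / 2 * nu i * b (i + 1)|
          + |θ / 2 * v (i - 1) + lam / 2 * nu i * b (i - 1)| + |E i| := by
          exact add_le_add_left (add_le_add_left (abs_add_le _ _) _) _
      _ = (1 - θ) * |v i| + P i + Q i + |E i| := by rw [t1]
  have SRHS : Summable (fun i => (1 - θ) * |v i| + P i + Q i + |E i|) :=
    (((svabs.mul_left (1 - θ)).add sP).add sQ).add sEabs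
  have main1 : ∑' i, |v' i| ≤ ∑' i, ((1 - θ) * |v i| + P i + Q i + |E i|) :=
    Summable.tsum_le_tsum step1 sv'.abs SRHS
  have split : ∑' i, ((1 - θ) * |v i| + P i + Q i + |E i|)
      = (1 - θ) * TV + (∑' i, P i + ∑' i, Q i) + ∑' i, |E i| := by
    rw [Summable.tsum_add (((svabs.mul_left (1 - θ)).add sP).add sQ) sEabs,
      Summable.tsum_add ((svabs.mul_left (1 - θ)).add sP) sQ,
      Summable.tsum_add (svabs.mul_left (1 - θ)) sP, tsum_mul_left, hTV]
    ring
  -- P+Q estimate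
  have hpt : ∀ j : ℤ, P (j - 1) + Q (j + 1) ≤ (θ + lam * Lf * D1) * |v j| := by
    intro j
    have e0 : j - 1 + 1 = j := by ring
    have e0' : j + 1 - 1 = j := by ring
    have e1 : P (j - 1) = |θ / 2 * v j - lam / 2 * nu (j - 1) * b j| := by
      simp only [hP, e0]
    have e2 : Q (j + 1) = |θ / 2 * v j + lam / 2 * nu (j + 1) * b j| := by
      simp only [hQ, e0']
    have habs : |θ / 2 * v j| = θ / 2 * |v j| := by
      rw [abs_mul, abs_of_pos (by positivity : (0:ℝ) < θ / 2)]
    have hq : |lam / 2 * nu (j - 1) * b j| ≤ |θ / 2 * v j| := by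
      rw [abs_mul, abs_mul, habs, abs_of_pos (by positivity : (0:ℝ) < lam / 2)]
      have h1 : lam / 2 * |nu (j - 1)| * |b j| ≤ lam / 2 * Mν * (Lf * |v j|) :=
        mul_le_mul (mul_le_mul_of_nonneg_left (hnub _) (by positivity)) (hbv j)
          (abs_nonneg _) (by positivity)
      nlinarith [abs_nonneg (v j), hlam.le]
    have key1 : |θ / 2 * v j - lam / 2 * nu (j - 1) * b j|
        + |θ / 2 * v j + lam / 2 * nu (j - 1) * b j| ≤ 2 * |θ / 2 * v j| :=
      abs_pair _ _ hq
    have hd : |nu (j + 1) - nu (j - 1)| ≤ 2 * D1 := by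
      have h1 := hnu1 j
      have h2 := hnu1' j
      calc |nu (j + 1) - nu (j - 1)| ≤ |nu (j + 1) - nu j| + |nu j - nu (j - 1)| :=
            abs_sub_le _ _ _
        _ ≤ 2 * D1 := by linarith
    have key2 : |θ / 2 * v j + lam / 2 * nu (j + 1) * b j|
        ≤ |θ / 2 * v j + lam / 2 * nu (j - 1) * b j|
          + lam / 2 * (|nu (j + 1) - nu (j - 1)| * |b j|) := by
      have e3 : θ / 2 * v j + lam / 2 * nu (j + 1) * b j
          = (θ / 2 * v j + lam / 2 * nu (j - 1) * b j)
            + lam / 2 * ((nu (j + 1) - nu (j - 1)) * b j) := by ring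
      rw [e3]
      refine (abs_add_le _ _).trans ?_
      rw [abs_mul, abs_mul, abs_of_pos (by positivity : (0:ℝ) < lam / 2)]
    have hb2 : |nu (j + 1) - nu (j - 1)| * |b j| ≤ 2 * D1 * (Lf * |v j|) :=
      mul_le_mul hd (hbv j) (abs_nonneg _) (by positivity)
    rw [e1, e2]
    nlinarith [hlam.le, abs_nonneg (v j)]
  have hPQ : ∑' i, P i + ∑' i, Q i ≤ (θ + lam * Lf * D1) * TV := by
    rw [← shift_tsum' P 1, ← shift_tsum Q 1,
      ← Summable.tsum_add (shift_summable' sP 1) (shift_summable sQ 1)]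
    calc ∑' j, (P (j - 1) + Q (j + 1)) ≤ ∑' j, (θ + lam * Lf * D1) * |v j| :=
          Summable.tsum_le_tsum hpt ((shift_summable' sP 1).add (shift_summable sQ 1))
            (svabs.mul_left _)
      _ = (θ + lam * Lf * D1) * TV := by rw [tsum_mul_left, hTV]
  -- E estimate
  have haS : ∑' i, |a i| ≤ Lf * S := by
    have := Summable.tsum_le_tsum ha saabs (hw.mul_left Lf)
    rwa [tsum_mul_left, hS] at this
  have hbTV : ∑' i, |b i| ≤ Lf * TV := by
    have h2 : Summable (fun i => Lf * |v i|) := svabs.mul_left Lf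
    have := Summable.tsum_le_tsum hbv sbabs h2
    rwa [tsum_mul_left, hTV] at this
  have hEsum : ∑' i, |E i| ≤ lam * Lf * D2 * S + 2 * lam * Lf * D1 * TV := by
    have h1 := Summable.tsum_le_tsum hEb sEabs sEdom
    have h2 : ∑' i, (lam / 2 * (D2 * (|a (i + 1)| + |a (i + 2)|))
        + lam / 2 * (D1 * (|b (i - 1)| + 2 * |b i| + |b (i + 1)|)))
        = lam / 2 * (D2 * (∑' i, |a (i + 1)| + ∑' i, |a (i + 2)|))
          + lam / 2 * (D1 * ((∑' i, |b (i - 1)| + 2 * ∑' i, |b i|) + ∑' i, |b (i + 1)|)) := by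
      rw [Summable.tsum_add ((((shift_summable saabs 1).add (shift_summable saabs 2)).mul_left
          D2).mul_left (lam / 2))
        (((((shift_summable' sbabs 1).add (sbabs.mul_left 2)).add
          (shift_summable sbabs 1)).mul_left D1).mul_left (lam / 2)),
        tsum_mul_left, tsum_mul_left, tsum_mul_left, tsum_mul_left,
        Summable.tsum_add ((shift_summable saabs 1)) ((shift_summable saabs 2)),
        Summable.tsum_add ((shift_summable' sbabs 1).add (sbabs.mul_left 2)) (shift_summable sbabs 1),
        Summable.tsum_add (shift_summable' sbabs 1) (sbabs.mul_left 2), tsum_mul_left]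
    rw [h2] at h1
    have ea1 : ∑' i : ℤ, |a (i + 1)| = ∑' i, |a i| := shift_tsum (fun i => |a i|) 1
    have ea2 : ∑' i : ℤ, |a (i + 2)| = ∑' i, |a i| := shift_tsum (fun i => |a i|) 2
    have eb1 : ∑' i : ℤ, |b (i - 1)| = ∑' i, |b i| := shift_tsum' (fun i => |b i|) 1
    have eb2 : ∑' i : ℤ, |b (i + 1)| = ∑' i, |b i| := shift_tsum (fun i => |b i|) 1
    rw [ea1, ea2, eb1, eb2] at h1
    have hfinal : lam / 2 * (D2 * (∑' i, |a i| + ∑' i, |a i|))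
        + lam / 2 * (D1 * ((∑' i, |b i| + 2 * ∑' i, |b i|) + ∑' i, |b i|))
        ≤ lam * Lf * D2 * S + 2 * lam * Lf * D1 * TV := by
      have g1 : ∑' i, |a i| + ∑' i, |a i| ≤ 2 * (Lf * S) := by linarith
      have g2 : (∑' i, |b i| + 2 * ∑' i, |b i|) + ∑' i, |b i| ≤ 4 * (Lf * TV) := by linarith
      have g3 : lam / 2 * (D2 * (∑' i, |a i| + ∑' i, |a i|))
          ≤ lam / 2 * (D2 * (2 * (Lf * S))) := by
        apply mul_le_mul_of_nonneg_left (mul_le_mul_of_nonneg_left g1 hD2) (by positivity)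
      have g4 : lam / 2 * (D1 * ((∑' i, |b i| + 2 * ∑' i, |b i|) + ∑' i, |b i|))
          ≤ lam / 2 * (D1 * (4 * (Lf * TV))) := by
        apply mul_le_mul_of_nonneg_left (mul_le_mul_of_nonneg_left g2 hD1) (by positivity)
      have e : lam / 2 * (D2 * (2 * (Lf * S))) + lam / 2 * (D1 * (4 * (Lf * TV)))
          = lam * Lf * D2 * S + 2 * lam * Lf * D1 * TV := by ring
      linarith [g3, g4]
    linarith
  -- final assembly
  have : (1 - θ) * TV + ((θ + lam * Lf * D1) * TV)
      + (lam * Lf * D2 * S + 2 * lam * Lf * D1 * TV)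
      = (1 + lam * Lf * (3 * D1)) * TV + lam * Lf * D2 * S := by ring
  linarith [main1, split.le, split.ge, hPQ, hEsum]

lemma scheme_form {f ν μ β : ℝ → ℝ} {lam θ Δx αc : ℝ} (hlam : lam ≠ 0) {w w' : ℤ → ℝ}
    (hstep : ∀ i, w' i = w i - lam * (Fnum f ν μ β lam θ Δx αc w i (w i) (w (i + 1))
      - Fnum f ν μ β lam θ Δx αc w (i - 1) (w (i - 1)) (w i))) (i : ℤ) :
    w' i = (1 - θ) * w i + θ / 2 * w (i + 1) + θ / 2 * w (i - 1)
      - lam / 2 * (ν (cdisc μ β Δx αc w i) * (f (w i) + f (w (i + 1)))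
        - ν (cdisc μ β Δx αc w (i - 1)) * (f (w (i - 1)) + f (w i))) := by
  rw [hstep i]
  unfold Fnum
  field_simp
  ring

set_option maxHeartbeats 1000000 in
lemma step_basic {f ν μ β : ℝ → ℝ} {Lf : NNReal} (hf : LipschitzWith Lf f) (hf0 : f 0 = 0)
    {Mν : ℝ} (hνb : ∀ x, |ν x| ≤ Mν)
    {lam θ Δx αc : ℝ} (hθ0 : 0 < θ) (hθ1 : θ < 2 / 3)
    (hcfl1 : lam * ((Lf : ℝ) * Mν) ≤ θ) (hcfl2 : lam * ((Lf : ℝ) * Mν) ≤ 2 / 3 - θ)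
    (hlam : 0 < lam)
    {w w' : ℤ → ℝ} (hw : Summable w) (hwpos : ∀ i, 0 ≤ w i)
    (hI : ∀ i, w' i = (1 - θ) * w i + θ / 2 * w (i + 1) + θ / 2 * w (i - 1)
      - lam / 2 * (ν (cdisc μ β Δx αc w i) * (f (w i) + f (w (i + 1)))
        - ν (cdisc μ β Δx αc w (i - 1)) * (f (w (i - 1)) + f (w i)))) :
    (∀ i, 0 ≤ w' i) ∧ Summable w' ∧ ∑' i, w' i = ∑' i, w i := by
  have hMν : 0 ≤ Mν := le_trans (abs_nonneg _) (hνb 0)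
  have ha : ∀ i : ℤ, |f (w i)| ≤ (Lf : ℝ) * w i := by
    intro i
    have := hf.dist_le_mul (w i) 0
    rw [Real.dist_eq, Real.dist_eq, hf0, sub_zero, sub_zero, abs_of_nonneg (hwpos i)] at this
    exact this
  set H : ℤ → ℝ := fun i => ν (cdisc μ β Δx αc w i) * (f (w i) + f (w (i + 1))) with hHdef
  have hHm : ∀ i : ℤ, ν (cdisc μ β Δx αc w (i - 1)) * (f (w (i - 1)) + f (w i)) = H (i - 1) := by
    intro i
    simp only [hHdef]
    norm_num
  have hHb : ∀ i : ℤ, |H i| ≤ Mν * ((Lf : ℝ) * w i + (Lf : ℝ) * w (i + 1)) := by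
    intro i
    simp only [hHdef]
    rw [abs_mul]
    refine mul_le_mul (hνb _) ?_ (abs_nonneg _) hMν
    exact (abs_add_le _ _).trans (add_le_add (ha i) (ha (i + 1)))
  have sH : Summable H := by
    apply Summable.of_norm_bounded (((hw.mul_left (Lf : ℝ)).add
      ((shift_summable hw 1).mul_left (Lf : ℝ))).mul_left Mν)
    intro i
    rw [Real.norm_eq_abs]
    exact hHb i
  have sHm : Summable (fun i => H (i - 1)) := shift_summable' sH 1
  -- positivity
  have hpos : ∀ i, 0 ≤ w' i := by
    intro i
    have hb : H i - H (i - 1) ≤ ((Lf : ℝ) * Mν) * (w (i - 1) + 2 * w i + w (i + 1)) := by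
      have h1 := hHb i
      have h2 := hHb (i - 1)
      have e : i - 1 + 1 = i := by ring
      rw [e] at h2
      have := abs_sub (H i) (H (i - 1))
      have l1 : H i - H (i - 1) ≤ |H i| + |H (i - 1)| := (le_abs_self _).trans this
      nlinarith
    have hI' : w' i = (1 - θ) * w i + θ / 2 * w (i + 1) + θ / 2 * w (i - 1)
        - lam / 2 * (H i - H (i - 1)) := by rw [hI i, hHm i]
    rw [hI']
    have hq1 : 0 ≤ θ - lam * ((Lf : ℝ) * Mν) := by linarith
    have hq2 : 0 ≤ 1 - θ - lam * ((Lf : ℝ) * Mν) := by linarith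
    have hmul := mul_le_mul_of_nonneg_left hb (by positivity : (0:ℝ) ≤ lam / 2)
    nlinarith [mul_nonneg hq1 (hwpos (i + 1)), mul_nonneg hq1 (hwpos (i - 1)),
      mul_nonneg hq2 (hwpos i), hwpos i, hwpos (i + 1), hwpos (i - 1), hlam.le]
  -- summability
  have hw1 : Summable (fun i => w (i + 1)) := shift_summable hw 1
  have hwm : Summable (fun i => w (i - 1)) := shift_summable' hw 1
  have sw' : Summable w' := by
    apply Summable.congr (f := fun i => (1 - θ) * w i + θ / 2 * w (i + 1) + θ / 2 * w (i - 1)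
      - lam / 2 * (H i - H (i - 1)))
    · exact (((hw.mul_left (1 - θ)).add (hw1.mul_left (θ / 2))).add
        (hwm.mul_left (θ / 2))).sub ((sH.sub sHm).mul_left (lam / 2))
    · intro i
      rw [hI i, hHm i]
  -- conservation
  have hcons : ∑' i, w' i = ∑' i, w i := by
    have e : ∀ i, w' i = (1 - θ) * w i + θ / 2 * w (i + 1) + θ / 2 * w (i - 1)
        - lam / 2 * (H i - H (i - 1)) := by
      intro i; rw [hI i, hHm i]
    rw [tsum_congr e]
    rw [Summable.tsum_sub (((hw.mul_left (1 - θ)).add (hw1.mul_left (θ / 2))).add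
        (hwm.mul_left (θ / 2))) ((sH.sub sHm).mul_left (lam / 2)),
      Summable.tsum_add ((hw.mul_left (1 - θ)).add (hw1.mul_left (θ / 2))) (hwm.mul_left (θ / 2)),
      Summable.tsum_add (hw.mul_left (1 - θ)) (hw1.mul_left (θ / 2)),
      tsum_mul_left, tsum_mul_left, tsum_mul_left, tsum_mul_left,
      Summable.tsum_sub sH sHm, shift_tsum w 1, shift_tsum' w 1, shift_tsum' H 1]
    ring
  exact ⟨hpos, sw', hcons⟩

set_option maxHeartbeats 2000000 in
lemma step_full
    {f ν β μ : ℝ → ℝ} {Lf : NNReal}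
    (hf : LipschitzWith Lf f) (hf0 : f 0 = 0)
    {Mν Lν Mν' : ℝ} (hνb : ∀ x, |ν x| ≤ Mν)
    (hνlip : ∀ x y, |ν x - ν y| ≤ Lν * |x - y|) (hLν : 0 ≤ Lν)
    (hνd : Differentiable ℝ ν) {Lν' : NNReal} (hνd' : LipschitzWith Lν' (deriv ν))
    (hνdb : ∀ x, |deriv ν x| ≤ Mν')
    {Lβ : ℝ} (hLβ : 0 ≤ Lβ) (hβlip : ∀ x y, |β x - β y| ≤ Lβ * |x - y|) (hβ0 : β 0 = 0)
    {Mμ Lμ : ℝ} (hμb : ∀ x, |μ x| ≤ Mμ) (hμlip : ∀ x y, |μ x - μ y| ≤ Lμ * |x - y|)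
    (hμd : Differentiable ℝ μ) {Lμ' : NNReal} (hμd' : LipschitzWith Lμ' (deriv μ))
    {lam θ Δx Δt αc K C : ℝ}
    (hθ0 : 0 < θ) (hθ1 : θ < 2 / 3) (hΔx : 0 < Δx) (hΔt : 0 < Δt) (hlam : lam = Δt / Δx)
    (hα0 : 0 ≤ αc) (hα1 : αc ≤ 1)
    (hcfl1 : lam * ((Lf : ℝ) * Mν) ≤ θ) (hcfl2 : lam * ((Lf : ℝ) * Mν) ≤ 2 / 3 - θ)
    (hK0 : 0 ≤ K)
    (hC1 : (Lf : ℝ) * (3 * (Lν * Lμ * Lβ * K)) ≤ C)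
    (hC2 : (Lf : ℝ) * (2 * (Lν' : ℝ) * (Lμ * Lβ * K) ^ 2 * K
        + Mν' * (2 * (Lμ' : ℝ) * Lβ * K) * K) ≤ C)
    {w w' : ℤ → ℝ} (hw : Summable w) (hwpos : ∀ i, 0 ≤ w i) (hwK : Δx * ∑' i, w i ≤ K)
    (hstep : ∀ i, w' i = w i - lam * (Fnum f ν μ β lam θ Δx αc w i (w i) (w (i + 1))
      - Fnum f ν μ β lam θ Δx αc w (i - 1) (w (i - 1)) (w i))) :
    (∀ i, 0 ≤ w' i) ∧ Summable w' ∧ (∑' i, w' i = ∑' i, w i) ∧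
      ∑' i, |w' (i + 1) - w' i| ≤ (1 + C * Δt) * ∑' i, |w (i + 1) - w i| + C * Δt := by
  have hMν : 0 ≤ Mν := le_trans (abs_nonneg _) (hνb 0)
  have hMν' : 0 ≤ Mν' := le_trans (abs_nonneg _) (hνdb 0)
  have hLμ : 0 ≤ Lμ := by
    have h1 := hμlip 1 0
    have h2 : (0:ℝ) ≤ |μ 1 - μ 0| := abs_nonneg _
    simp only [sub_zero, abs_one, mul_one] at h1
    linarith
  have hlam0 : 0 < lam := by rw [hlam]; positivity
  have hlamne : lam ≠ 0 := ne_of_gt hlam0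
  have hlamΔx : lam * Δx = Δt := by rw [hlam]; field_simp
  have hI := scheme_form hlamne hstep
  obtain ⟨hpos, sw', hcons⟩ := step_basic hf hf0 hνb hθ0 hθ1 hcfl1 hcfl2 hlam0 hw hwpos hI
  refine ⟨hpos, sw', hcons, ?_⟩
  -- notations
  set S : ℝ := ∑' i, w i with hSdef
  have hS0 : 0 ≤ S := tsum_nonneg hwpos
  have hΔxS : 0 ≤ Δx * S := by positivity
  -- Lipschitz bound for f-values
  have hflip : ∀ x y : ℝ, |f x - f y| ≤ (Lf : ℝ) * |x - y| := by
    intro x y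
    have := hf.dist_le_mul x y
    rwa [Real.dist_eq, Real.dist_eq] at this
  have ha : ∀ i : ℤ, |f (w i)| ≤ (Lf : ℝ) * w i := by
    intro i
    have := hflip (w i) 0
    rwa [hf0, sub_zero, sub_zero, abs_of_nonneg (hwpos i)] at this
  -- c differences
  have hcd : ∀ i : ℤ, |cdisc μ β Δx αc w (i + 1) - cdisc μ β Δx αc w i|
      ≤ Lμ * Lβ * Δx ^ 2 * S :=
    fun i => cdisc_first_diff hLβ hβlip hβ0 hμb hμlip hw hwpos hα0 hα1 hΔx i
  have hcs : ∀ i : ℤ, |cdisc μ β Δx αc w (i + 1) - 2 * cdisc μ β Δx αc w i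
      + cdisc μ β Δx αc w (i - 1)| ≤ 2 * (Lμ' : ℝ) * Lβ * Δx ^ 3 * S :=
    fun i => cdisc_sec_diff hLβ hβlip hβ0 hμb hμd hμd' hw hwpos hα0 hα1 hΔx i
  -- nu-level bounds
  set D1 : ℝ := Lν * (Lμ * Lβ * Δx ^ 2 * S) with hD1def
  set D2 : ℝ := (Lν' : ℝ) * (2 * (Lμ * Lβ * Δx ^ 2 * S) ^ 2)
      + Mν' * (2 * (Lμ' : ℝ) * Lβ * Δx ^ 3 * S) with hD2def
  have hD1 : 0 ≤ D1 := by
    rw [hD1def]; positivity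
  have hD2 : 0 ≤ D2 := by
    rw [hD2def]; positivity
  have hnu1 : ∀ i : ℤ, |ν (cdisc μ β Δx αc w (i + 1)) - ν (cdisc μ β Δx αc w i)| ≤ D1 := by
    intro i
    refine (hνlip _ _).trans ?_
    rw [hD1def]
    exact mul_le_mul_of_nonneg_left (hcd i) hLν
  have hnu2 : ∀ i : ℤ, |ν (cdisc μ β Δx αc w (i + 1)) - 2 * ν (cdisc μ β Δx αc w i)
      + ν (cdisc μ β Δx αc w (i - 1))| ≤ D2 := by
    intro i
    refine (nu_secdiff hνd hνd' hνdb _ _ _).trans ?_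
    rw [hD2def]
    have e1 : |cdisc μ β Δx αc w (i + 1) - cdisc μ β Δx αc w i| ≤ Lμ * Lβ * Δx ^ 2 * S := hcd i
    have e2 : |cdisc μ β Δx αc w (i - 1) - cdisc μ β Δx αc w i| ≤ Lμ * Lβ * Δx ^ 2 * S := by
      have := hcd (i - 1)
      rw [show i - 1 + 1 = i from by ring] at this
      rwa [abs_sub_comm]
    have e3 := hcs i
    have q1 : (cdisc μ β Δx αc w (i + 1) - cdisc μ β Δx αc w i) ^ 2
        ≤ (Lμ * Lβ * Δx ^ 2 * S) ^ 2 := by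
      rw [← sq_abs]
      exact pow_le_pow_left₀ (abs_nonneg _) e1 2
    have q2 : (cdisc μ β Δx αc w (i - 1) - cdisc μ β Δx αc w i) ^ 2
        ≤ (Lμ * Lβ * Δx ^ 2 * S) ^ 2 := by
      rw [← sq_abs]
      exact pow_le_pow_left₀ (abs_nonneg _) e2 2
    have l1 : (Lν' : ℝ) * ((cdisc μ β Δx αc w (i + 1) - cdisc μ β Δx αc w i) ^ 2
        + (cdisc μ β Δx αc w (i - 1) - cdisc μ β Δx αc w i) ^ 2)
        ≤ (Lν' : ℝ) * (2 * (Lμ * Lβ * Δx ^ 2 * S) ^ 2) := by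
      apply mul_le_mul_of_nonneg_left _ (Lν').2
      linarith
    have l2 : Mν' * |cdisc μ β Δx αc w (i + 1) - 2 * cdisc μ β Δx αc w i
        + cdisc μ β Δx αc w (i - 1)| ≤ Mν' * (2 * (Lμ' : ℝ) * Lβ * Δx ^ 3 * S) :=
      mul_le_mul_of_nonneg_left e3 hMν'
    linarith
  -- the tv_core application
  have sv' : Summable (fun i => w' (i + 1) - w' i) := (shift_summable sw' 1).sub sw'
  have hII : ∀ i : ℤ, (fun i => w' (i + 1) - w' i) i
      = (1 - θ) * ((fun i => w (i + 1) - w i) i)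
        + (θ / 2 * ((fun i => w (i + 1) - w i) (i + 1))
          - lam / 2 * ν (cdisc μ β Δx αc w i) * ((fun i => f (w (i + 1)) - f (w i)) (i + 1)))
        + (θ / 2 * ((fun i => w (i + 1) - w i) (i - 1))
          + lam / 2 * ν (cdisc μ β Δx αc w i) * ((fun i => f (w (i + 1)) - f (w i)) (i - 1)))
        - lam / 2 * ((ν (cdisc μ β Δx αc w (i + 1)) - 2 * ν (cdisc μ β Δx αc w i)
            + ν (cdisc μ β Δx αc w (i - 1))) * (f (w (i + 1)) + f (w (i + 2)))
          + (ν (cdisc μ β Δx αc w i) - ν (cdisc μ β Δx αc w (i - 1)))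
            * ((fun i => f (w (i + 1)) - f (w i)) (i - 1)
              + 2 * ((fun i => f (w (i + 1)) - f (w i)) i)
              + ((fun i => f (w (i + 1)) - f (w i)) (i + 1)))) := by
    intro i
    simp only []
    have h1 := hI i
    have h2 := hI (i + 1)
    rw [show i + 1 - 1 = i from by ring, show i + 1 + 1 = i + 2 from by ring] at h2
    rw [show i - 1 + 1 = i from by ring]
    rw [h2, h1]
    ring
  have key := tv_core (fun i => ν (cdisc μ β Δx αc w i)) (fun i => f (w i)) w
    (fun i => w (i + 1) - w i) (fun i => f (w (i + 1)) - f (w i))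
    (fun i => w' (i + 1) - w' i) θ lam (Lf : ℝ) Mν D1 D2 S (∑' i, |w (i + 1) - w i|)
    hθ0 hθ1 hlam0 (Lf).2 hMν hD1 hD2 hcfl1 hw hwpos rfl (fun i => rfl) (fun i => rfl)
    ha (fun i => hflip (w (i + 1)) (w i)) (fun i => hνb _) hnu1 hnu2 sv' hII rfl
  -- convert the coefficients
  refine key.trans ?_
  have hTV0 : 0 ≤ ∑' i, |w (i + 1) - w i| := tsum_nonneg (fun i => abs_nonneg _)
  have hLLL : (0:ℝ) ≤ Lν * Lμ * Lβ := mul_nonneg (mul_nonneg hLν hLμ) hLβ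
  have hc1 : lam * (Lf : ℝ) * (3 * D1) ≤ C * Δt := by
    have e : lam * (Lf : ℝ) * (3 * D1)
        = (Lf : ℝ) * (3 * (Lν * Lμ * Lβ * (Δx * S))) * (lam * Δx) := by
      rw [hD1def]; ring
    rw [e, hlamΔx]
    apply mul_le_mul_of_nonneg_right _ hΔt.le
    refine le_trans ?_ hC1
    apply mul_le_mul_of_nonneg_left _ (Lf).2
    apply mul_le_mul_of_nonneg_left _ (by norm_num : (0:ℝ) ≤ 3)
    exact mul_le_mul_of_nonneg_left hwK hLLL
  have hc2 : lam * (Lf : ℝ) * D2 * S ≤ C * Δt := by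
    have e : lam * (Lf : ℝ) * D2 * S
        = (Lf : ℝ) * (2 * (Lν' : ℝ) * (Lμ * Lβ * (Δx * S)) ^ 2 * (Δx * S)
            + Mν' * (2 * (Lμ' : ℝ) * Lβ * (Δx * S)) * (Δx * S)) * (lam * Δx) := by
      rw [hD2def]; ring
    rw [e, hlamΔx]
    apply mul_le_mul_of_nonneg_right _ hΔt.le
    refine le_trans ?_ hC2
    apply mul_le_mul_of_nonneg_left _ (Lf).2
    have hLL2 : (0:ℝ) ≤ Lμ * Lβ := mul_nonneg hLμ hLβ
    have a1 : (Lμ * Lβ * (Δx * S)) ^ 2 ≤ (Lμ * Lβ * K) ^ 2 := by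
      apply pow_le_pow_left₀ (by positivity)
      exact mul_le_mul_of_nonneg_left hwK hLL2
    have a2 : 2 * (Lν' : ℝ) * (Lμ * Lβ * (Δx * S)) ^ 2 * (Δx * S)
        ≤ 2 * (Lν' : ℝ) * (Lμ * Lβ * K) ^ 2 * K := by
      apply mul_le_mul (mul_le_mul_of_nonneg_left a1 (by positivity)) hwK hΔxS
      positivity
    have a3 : Mν' * (2 * (Lμ' : ℝ) * Lβ * (Δx * S)) * (Δx * S)
        ≤ Mν' * (2 * (Lμ' : ℝ) * Lβ * K) * K := by
      apply mul_le_mul (mul_le_mul_of_nonneg_left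
        (mul_le_mul_of_nonneg_left hwK (by positivity)) hMν') hwK hΔxS
      positivity
    linarith
  have hmul1 := mul_le_mul_of_nonneg_right hc1 hTV0
  nlinarith [hmul1, hc2, hTV0]

lemma init_facts {u0 : ℝ → ℝ} (hu0 : Integrable u0) (hu0pos : ∀ x, 0 ≤ u0 x)
    {Δx : ℝ} (hΔx : 0 < Δx) (u : ℤ → ℝ)
    (hu : ∀ i : ℤ, u i
      = (1 / Δx) * ∫ x in Set.Ico ((i : ℝ) * Δx - Δx / 2) ((i : ℝ) * Δx + Δx / 2), u0 x) :
    (∀ i, 0 ≤ u i) ∧ Summable u ∧ Δx * ∑' i, u i ≤ ∫ x, u0 x := by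
  have hpos : ∀ i, 0 ≤ u i := by
    intro i
    rw [hu i]
    apply mul_nonneg (by positivity)
    exact setIntegral_nonneg measurableSet_Ico (fun x _ => hu0pos x)
  have hcell : ∀ i : ℤ, Δx * u i
      = ∫ x in Set.Ico ((i : ℝ) * Δx - Δx / 2) ((i : ℝ) * Δx + Δx / 2), u0 x := by
    intro i
    rw [hu i]
    field_simp
  have key : ∀ s : Finset ℤ, ∑ i ∈ s, u i ≤ (∫ x, u0 x) / Δx := by
    intro s
    have hdisj : (s : Set ℤ).Pairwise (Function.onFun Disjoint
        (fun i : ℤ => Set.Ico ((i : ℝ) * Δx - Δx / 2) ((i : ℝ) * Δx + Δx / 2))) := by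
      intro i _ j _ hij
      apply Set.Ico_disjoint_Ico.2
      rcases lt_or_gt_of_ne hij with h | h
      · have : (i : ℝ) + 1 ≤ (j : ℝ) := by exact_mod_cast h
        refine le_trans (min_le_left _ _) (le_trans ?_ (le_max_right _ _))
        nlinarith
      · have : (j : ℝ) + 1 ≤ (i : ℝ) := by exact_mod_cast h
        refine le_trans (min_le_right _ _) (le_trans ?_ (le_max_left _ _))
        nlinarith
    have h1 : ∑ i ∈ s, Δx * u i
        = ∫ x in ⋃ i ∈ s, Set.Ico ((i : ℝ) * Δx - Δx / 2) ((i : ℝ) * Δx + Δx / 2), u0 x := by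
      rw [integral_biUnion_finset s (fun i _ => measurableSet_Ico) hdisj
        (fun i _ => hu0.integrableOn)]
      exact Finset.sum_congr rfl (fun i _ => hcell i)
    have h2 : (∫ x in ⋃ i ∈ s, Set.Ico ((i : ℝ) * Δx - Δx / 2) ((i : ℝ) * Δx + Δx / 2), u0 x)
        ≤ ∫ x, u0 x := setIntegral_le_integral hu0 (Filter.Eventually.of_forall hu0pos)
    rw [le_div_iff₀ hΔx]
    calc (∑ i ∈ s, u i) * Δx = ∑ i ∈ s, Δx * u i := by rw [Finset.sum_mul]; congr 1; ext i; ring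
      _ ≤ ∫ x, u0 x := by rw [h1]; exact h2
  have hsum : Summable u := summable_of_sum_le hpos key
  refine ⟨hpos, hsum, ?_⟩
  have := Summable.tsum_le_of_sum_le hsum key
  rw [le_div_iff₀ hΔx] at this
  linarith

lemma lip_of_deriv_bound {g : ℝ → ℝ} (hg : Differentiable ℝ g) {M : ℝ}
    (hM : ∀ x, |deriv g x| ≤ M) : ∀ x y, |g x - g y| ≤ M * |x - y| := by
  intro x y
  have := Convex.norm_image_sub_le_of_norm_hasDerivWithin_le
    (f := g) (f' := deriv g) (C := M) (s := Set.univ)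
    (fun t _ => (hg t).hasDerivAt.hasDerivWithinAt)
    (fun t _ => hM t) convex_univ (Set.mem_univ y) (Set.mem_univ x)
  simpa [Real.norm_eq_abs] using this

set_option maxHeartbeats 2000000 in
/-- BV estimate: there is `L₂ > 0` depending only on `f, ν, β, μ, ‖u₀‖_{L¹}, T`
(but not on `Δx, Δt`) such that
`Σ_i |u^n_{i+1} − u^n_i| ≤ exp(L₂ T)(Σ_i |u⁰_{i+1} − u⁰_i| + L₂)` for `0 ≤ n ≤ N`. -/
theorem stmt5 (f ν β μ : ℝ → ℝ) (Lf : NNReal) (Mν : ℝ)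
    (hf : LipschitzWith Lf f) (hf0 : f 0 = 0)
    (hν : SmoothData ν) (hν0 : ν 0 = 0) (hνb : ∀ x, |ν x| ≤ Mν)
    (hβ : SmoothData β) (hβ0 : β 0 = 0)
    (hμ : SmoothData μ)
    (T : ℝ) (hT : 0 < T)
    (u0 : ℝ → ℝ) (hu0 : Integrable u0) (hu0bv : BoundedVariationOn u0 Set.univ)
    (hu0pos : ∀ x, 0 ≤ u0 x) :
    ∃ L₂ : ℝ, 0 < L₂ ∧
      ∀ (Δx Δt θ αc : ℝ) (N : ℕ) (u : ℕ → ℤ → ℝ),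
        0 < Δx → 0 < Δt → T = N * Δt →
        θ ∈ Set.Ioo (0 : ℝ) (2 / 3) → αc ∈ Set.Icc (0 : ℝ) 1 →
        Δt / Δx ≤ min 1 (min (4 - 6 * θ) (6 * θ)) / (1 + 6 * (Lf : ℝ) * Mν) →
        SchemeHyp f ν μ β u0 Δx Δt θ αc N u →
        ∀ n ≤ N,
          (∑' i : ℤ, |u n (i + 1) - u n i|)
            ≤ Real.exp (L₂ * T) * ((∑' i : ℤ, |u 0 (i + 1) - u 0 i|) + L₂) := by
  -- unpack data regularity
  obtain ⟨hνc, -, -, ⟨Mν', hνdb⟩, ⟨Lν', hνd'⟩⟩ := hν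
  obtain ⟨hβc, -, -, ⟨Mβ', hβdb⟩, -⟩ := hβ
  obtain ⟨hμc, ⟨Mμ, hμb⟩, -, ⟨Mμ', hμdb⟩, ⟨Lμ', hμd'⟩⟩ := hμ
  have hνd : Differentiable ℝ ν := hνc.differentiable (by norm_num)
  have hβd : Differentiable ℝ β := hβc.differentiable (by norm_num)
  have hμd : Differentiable ℝ μ := hμc.differentiable (by norm_num)
  have hνlip := lip_of_deriv_bound hνd hνdb
  have hβlip := lip_of_deriv_bound hβd hβdb
  have hμlip := lip_of_deriv_bound hμd hμdb
  have hMν : 0 ≤ Mν := le_trans (abs_nonneg _) (hνb 0)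
  have hMν' : 0 ≤ Mν' := le_trans (abs_nonneg _) (hνdb 0)
  have hMβ' : 0 ≤ Mβ' := le_trans (abs_nonneg _) (hβdb 0)
  have hMμ' : 0 ≤ Mμ' := le_trans (abs_nonneg _) (hμdb 0)
  -- the constant
  set K : ℝ := ∫ x, u0 x with hKdef
  have hK0 : 0 ≤ K := integral_nonneg hu0pos
  set A : ℝ := (Lf : ℝ) * (3 * (Mν' * Mμ' * Mβ' * K)) with hAdef
  set B : ℝ := (Lf : ℝ) * (2 * (Lν' : ℝ) * (Mμ' * Mβ' * K) ^ 2 * K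
      + Mν' * (2 * (Lμ' : ℝ) * Mβ' * K) * K) with hBdef
  have hA0 : 0 ≤ A := by rw [hAdef]; positivity
  have hB0 : 0 ≤ B := by rw [hBdef]; positivity
  set C : ℝ := A + B with hCdef
  have hC0 : 0 ≤ C := by rw [hCdef]; linarith
  refine ⟨max C 1, lt_of_lt_of_le one_pos (le_max_right _ _), ?_⟩
  intro Δx Δt θ αc N u hΔx hΔt hTN hθ hα hCFL hsch n hn
  obtain ⟨hθ0, hθ1⟩ := hθ
  obtain ⟨hα0, hα1⟩ := hα
  -- CFL consequences
  have hden : (0 : ℝ) < 1 + 6 * (Lf : ℝ) * Mν := by positivity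
  have hlam0 : 0 < Δt / Δx := by positivity
  have hCFL' : (Δt / Δx) * (1 + 6 * (Lf : ℝ) * Mν) ≤ min 1 (min (4 - 6 * θ) (6 * θ)) := by
    rw [← le_div_iff₀ hden]
    exact hCFL
  have hm1 : min 1 (min (4 - 6 * θ) (6 * θ)) ≤ 1 := min_le_left _ _
  have hm2 : min 1 (min (4 - 6 * θ) (6 * θ)) ≤ 4 - 6 * θ :=
    le_trans (min_le_right _ _) (min_le_left _ _)
  have hm3 : min 1 (min (4 - 6 * θ) (6 * θ)) ≤ 6 * θ :=
    le_trans (min_le_right _ _) (min_le_right _ _)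
  have hexp : (Δt / Δx) * (1 + 6 * (Lf : ℝ) * Mν)
      = Δt / Δx + 6 * ((Δt / Δx) * ((Lf : ℝ) * Mν)) := by ring
  have hcfl1 : (Δt / Δx) * ((Lf : ℝ) * Mν) ≤ θ := by nlinarith
  have hcfl2 : (Δt / Δx) * ((Lf : ℝ) * Mν) ≤ 2 / 3 - θ := by nlinarith
  -- initial data facts
  obtain ⟨h0pos, h0sum, h0K⟩ := init_facts hu0 hu0pos hΔx (u 0) hsch.1
  -- invariant by induction
  have hC1 : A ≤ C := by rw [hCdef]; linarith
  have hC2 : B ≤ C := by rw [hCdef]; linarith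
  have inv : ∀ m : ℕ, m ≤ N →
      (∀ i, 0 ≤ u m i) ∧ Summable (u m) ∧ (∑' i, u m i = ∑' i, u 0 i) ∧
        (∑' i, |u m (i + 1) - u m i|)
          ≤ (1 + C * Δt) ^ m * ((∑' i, |u 0 (i + 1) - u 0 i|) + 1) - 1 := by
    intro m
    induction m with
    | zero =>
      intro _
      refine ⟨h0pos, h0sum, rfl, ?_⟩
      have : (1 + C * Δt) ^ 0 = 1 := pow_zero _
      rw [this]
      linarith
    | succ m ih =>
      intro hmN
      have hmN' : m ≤ N := le_of_lt (Nat.lt_of_succ_le hmN)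
      obtain ⟨hmpos, hmsum, hmcons, hmTV⟩ := ih hmN'
      have hmK : Δx * ∑' i, u m i ≤ K := by rw [hmcons]; exact h0K
      have hstepm : ∀ i, u (m + 1) i = u m i
          - (Δt / Δx) * (Fnum f ν μ β (Δt / Δx) θ Δx αc (u m) i (u m i) (u m (i + 1))
            - Fnum f ν μ β (Δt / Δx) θ Δx αc (u m) (i - 1) (u m (i - 1)) (u m i)) :=
        hsch.2 m (Nat.lt_of_succ_le hmN)
      obtain ⟨hpos', hsum', hcons', hTV'⟩ := step_full hf hf0 hνb hνlip hMν' hνd hνd' hνdb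
        hMβ' hβlip hβ0 hμb hμlip hμd hμd' hθ0 hθ1 hΔx hΔt rfl hα0 hα1 hcfl1 hcfl2 hK0
        (le_trans (le_of_eq hAdef.symm) hC1) (le_trans (le_of_eq hBdef.symm) hC2)
        hmsum hmpos hmK hstepm
      refine ⟨hpos', hsum', by rw [hcons', hmcons], ?_⟩
      have hTV0 : 0 ≤ ∑' i, |u 0 (i + 1) - u 0 i| := tsum_nonneg (fun i => abs_nonneg _)
      have hq : (0:ℝ) ≤ 1 + C * Δt := by positivity
      calc ∑' i, |u (m + 1) (i + 1) - u (m + 1) i|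
          ≤ (1 + C * Δt) * ∑' i, |u m (i + 1) - u m i| + C * Δt := hTV'
        _ ≤ (1 + C * Δt) * ((1 + C * Δt) ^ m * ((∑' i, |u 0 (i + 1) - u 0 i|) + 1) - 1)
            + C * Δt := by
            apply add_le_add_left
            exact mul_le_mul_of_nonneg_left hmTV hq
        _ = (1 + C * Δt) ^ (m + 1) * ((∑' i, |u 0 (i + 1) - u 0 i|) + 1) - 1 := by
            rw [pow_succ]
            ring
  -- conclude
  obtain ⟨-, -, -, hTVn⟩ := inv n hn
  have hTV0 : 0 ≤ ∑' i, |u 0 (i + 1) - u 0 i| := tsum_nonneg (fun i => abs_nonneg _)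
  have hpow : (1 + C * Δt) ^ n ≤ Real.exp (C * T) := by
    have h1 : 1 + C * Δt ≤ Real.exp (C * Δt) := by
      have := Real.add_one_le_exp (C * Δt)
      linarith
    have h2 : (1 + C * Δt) ^ n ≤ Real.exp (C * Δt) ^ n :=
      pow_le_pow_left₀ (by positivity) h1 n
    have h3 : Real.exp (C * Δt) ^ n = Real.exp (n * (C * Δt)) := (Real.exp_nat_mul _ n).symm
    rw [h3] at h2
    refine h2.trans (Real.exp_le_exp.2 ?_)
    have hnN : (n : ℝ) ≤ (N : ℝ) := by exact_mod_cast hn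
    have : (n : ℝ) * (C * Δt) ≤ (N : ℝ) * (C * Δt) := by
      apply mul_le_mul_of_nonneg_right hnN (by positivity)
    rw [hTN]
    nlinarith
  have hCL : C ≤ max C 1 := le_max_left _ _
  have hL1 : (1:ℝ) ≤ max C 1 := le_max_right _ _
  have hexpmono : Real.exp (C * T) ≤ Real.exp (max C 1 * T) :=
    Real.exp_le_exp.2 (mul_le_mul_of_nonneg_right hCL hT.le)
  calc ∑' i, |u n (i + 1) - u n i|
      ≤ (1 + C * Δt) ^ n * ((∑' i, |u 0 (i + 1) - u 0 i|) + 1) - 1 := hTVn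
    _ ≤ Real.exp (C * T) * ((∑' i, |u 0 (i + 1) - u 0 i|) + 1) := by
        have := mul_le_mul_of_nonneg_right hpow (by linarith : (0:ℝ) ≤ (∑' i, |u 0 (i + 1) - u 0 i|) + 1)
        linarith
    _ ≤ Real.exp (max C 1 * T) * ((∑' i, |u 0 (i + 1) - u 0 i|) + max C 1) := by
        apply mul_le_mul hexpmono (by linarith) (by linarith) (Real.exp_nonneg _)
end

section
/- Assume the scheme setting with nonnegative initial data u₀ ∈ (L¹ ∩ BV)(ℝ), and define the numerical entropy flux 𝒢^n_{i+1/2}(a, b, k) = F^n_{i+1/2}(a ∨ k, b ∨ k) − F^n_{i+1/2}(a ∧ k, b ∧ k). Then for every k ∈ ℝ, every i ∈ ℤ and every 0 ≤ n < N the discrete entropy inequality holds: |u^{n+1}_i − k| − |u^n_i − k| + λ ( 𝒢^n_{i+1/2}(u^n_i, u^n_{i+1}, k) − 𝒢^n_{i−1/2}(u^n_{i−1}, u^n_i, k) ) + λ sgn(u^{n+1}_i − k) f(k) ( ν(c^n_{i+1/2}) − ν(c^n_{i−1/2}) ) ≤ 0. -/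
open MeasureTheory

/-- The numerical entropy flux
`𝒢^n_{i+1/2}(a,b,k) = F^n_{i+1/2}(a ∨ k, b ∨ k) − F^n_{i+1/2}(a ∧ k, b ∧ k)`. -/
noncomputable def Gnum (f ν μ β : ℝ → ℝ) (lam θ Δx αc : ℝ) (v : ℤ → ℝ) (i : ℤ)
    (a b k : ℝ) : ℝ :=
  Fnum f ν μ β lam θ Δx αc v i (max a k) (max b k)
    - Fnum f ν μ β lam θ Δx αc v i (min a k) (min b k)

/-- Explicit form of the scheme update operator, with `p = ν(c_{i+1/2})`,
`q = ν(c_{i-1/2})` abstracted. -/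
noncomputable def E (f : ℝ → ℝ) (lam θ p q a b c : ℝ) : ℝ :=
  b - lam * p * (f b + f c) / 2 + θ * (c - b) / 2
    + lam * q * (f a + f b) / 2 - θ * (b - a) / 2

lemma lip_abs {Lf : NNReal} {f : ℝ → ℝ} (hf : LipschitzWith Lf f) (x y : ℝ) :
    |f x - f y| ≤ (Lf : ℝ) * |x - y| := by
  simpa [Real.dist_eq] using hf.dist_le_mul x y

lemma Hs_eq (f ν μ β : ℝ → ℝ) (lam θ Δx αc : ℝ) (v : ℤ → ℝ) (i : ℤ) (a b c : ℝ)
    (hlam : lam ≠ 0) :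
    b - lam * (Fnum f ν μ β lam θ Δx αc v i b c
        - Fnum f ν μ β lam θ Δx αc v (i - 1) a b)
      = E f lam θ (ν (cdisc μ β Δx αc v i)) (ν (cdisc μ β Δx αc v (i - 1))) a b c := by
  simp only [Fnum, E]
  field_simp
  ring

lemma E_mono_a {f : ℝ → ℝ} {Lf : NNReal} (hf : LipschitzWith Lf f)
    {lam θ Mν p q : ℝ} (hlam : 0 ≤ lam) (hp : |p| ≤ Mν) (hq : |q| ≤ Mν)
    (h1 : lam * Lf * Mν ≤ θ) {a a' b c : ℝ} (h : a ≤ a') :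
    E f lam θ p q a b c ≤ E f lam θ p q a' b c := by
  have hM : 0 ≤ Mν := (abs_nonneg p).trans hp
  have hL : |f a' - f a| ≤ (Lf : ℝ) * (a' - a) := by
    simpa [abs_of_nonneg (sub_nonneg.mpr h)] using lip_abs hf a' a
  have hb : |q * (f a' - f a)| ≤ Mν * ((Lf : ℝ) * (a' - a)) := by
    rw [abs_mul]
    exact mul_le_mul hq hL (abs_nonneg _) hM
  have h2 : -(Mν * ((Lf : ℝ) * (a' - a))) ≤ q * (f a' - f a) := neg_le_of_abs_le hb
  have h3 : lam * -(Mν * ((Lf : ℝ) * (a' - a))) ≤ lam * (q * (f a' - f a)) :=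
    mul_le_mul_of_nonneg_left h2 hlam
  have h4 : 0 ≤ (θ - lam * Lf * Mν) * (a' - a) :=
    mul_nonneg (by linarith) (by linarith)
  simp only [E]
  nlinarith [h3, h4]

lemma E_mono_c {f : ℝ → ℝ} {Lf : NNReal} (hf : LipschitzWith Lf f)
    {lam θ Mν p q : ℝ} (hlam : 0 ≤ lam) (hp : |p| ≤ Mν) (hq : |q| ≤ Mν)
    (h1 : lam * Lf * Mν ≤ θ) {a b c c' : ℝ} (h : c ≤ c') :
    E f lam θ p q a b c ≤ E f lam θ p q a b c' := by
  have hM : 0 ≤ Mν := (abs_nonneg p).trans hp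
  have hL : |f c' - f c| ≤ (Lf : ℝ) * (c' - c) := by
    simpa [abs_of_nonneg (sub_nonneg.mpr h)] using lip_abs hf c' c
  have hb : |p * (f c' - f c)| ≤ Mν * ((Lf : ℝ) * (c' - c)) := by
    rw [abs_mul]
    exact mul_le_mul hp hL (abs_nonneg _) hM
  have h2 : p * (f c' - f c) ≤ Mν * ((Lf : ℝ) * (c' - c)) := le_of_abs_le hb
  have h3 : lam * (p * (f c' - f c)) ≤ lam * (Mν * ((Lf : ℝ) * (c' - c))) :=
    mul_le_mul_of_nonneg_left h2 hlam
  have h4 : 0 ≤ (θ - lam * Lf * Mν) * (c' - c) :=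
    mul_nonneg (by linarith) (by linarith)
  simp only [E]
  nlinarith [h3, h4]

lemma E_mono_b {f : ℝ → ℝ} {Lf : NNReal} (hf : LipschitzWith Lf f)
    {lam θ Mν p q : ℝ} (hlam : 0 ≤ lam) (hp : |p| ≤ Mν) (hq : |q| ≤ Mν)
    (h2 : θ + lam * Lf * Mν ≤ 1) {a b b' c : ℝ} (h : b ≤ b') :
    E f lam θ p q a b c ≤ E f lam θ p q a b' c := by
  have hM : 0 ≤ Mν := (abs_nonneg p).trans hp
  have hL : |f b' - f b| ≤ (Lf : ℝ) * (b' - b) := by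
    simpa [abs_of_nonneg (sub_nonneg.mpr h)] using lip_abs hf b' b
  have hbp : |p * (f b' - f b)| ≤ Mν * ((Lf : ℝ) * (b' - b)) := by
    rw [abs_mul]; exact mul_le_mul hp hL (abs_nonneg _) hM
  have hbq : |q * (f b' - f b)| ≤ Mν * ((Lf : ℝ) * (b' - b)) := by
    rw [abs_mul]; exact mul_le_mul hq hL (abs_nonneg _) hM
  have h3p : lam * (p * (f b' - f b)) ≤ lam * (Mν * ((Lf : ℝ) * (b' - b))) :=
    mul_le_mul_of_nonneg_left (le_of_abs_le hbp) hlam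
  have h3q : lam * -(Mν * ((Lf : ℝ) * (b' - b))) ≤ lam * (q * (f b' - f b)) :=
    mul_le_mul_of_nonneg_left (neg_le_of_abs_le hbq) hlam
  have h4 : 0 ≤ (1 - θ - lam * Lf * Mν) * (b' - b) :=
    mul_nonneg (by linarith) (by linarith)
  simp only [E]
  nlinarith [h3p, h3q, h4]

lemma real_sign_mul_self (x : ℝ) : Real.sign x * x = |x| := by
  rcases lt_trichotomy x 0 with h | h | h
  · rw [Real.sign_of_neg h, abs_of_neg h]; ring
  · simp [h]
  · rw [Real.sign_of_pos h, abs_of_pos h]; ring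

lemma abs_sign_le (x : ℝ) : |Real.sign x| ≤ 1 := by
  rcases lt_trichotomy x 0 with h | h | h
  · simp [Real.sign_of_neg h]
  · simp [h]
  · simp [Real.sign_of_pos h]

/-- Discrete entropy inequality: for every `k ∈ ℝ`, `i ∈ ℤ`, `0 ≤ n < N`,
`|u^{n+1}_i − k| − |u^n_i − k|
  + λ(𝒢^n_{i+1/2}(u^n_i, u^n_{i+1}, k) − 𝒢^n_{i−1/2}(u^n_{i−1}, u^n_i, k))
  + λ sgn(u^{n+1}_i − k) f(k)(ν(c^n_{i+1/2}) − ν(c^n_{i−1/2})) ≤ 0`. -/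
theorem stmt7 (f ν β μ : ℝ → ℝ) (Lf : NNReal) (Mν : ℝ)
    (hf : LipschitzWith Lf f) (hf0 : f 0 = 0)
    (hν : SmoothData ν) (hν0 : ν 0 = 0) (hνb : ∀ x, |ν x| ≤ Mν)
    (hβ : SmoothData β) (hβ0 : β 0 = 0)
    (hμ : SmoothData μ)
    (T Δx Δt θ αc : ℝ) (N : ℕ)
    (hΔx : 0 < Δx) (hΔt : 0 < Δt) (hT : 0 < T) (hTN : T = N * Δt)
    (hθ : θ ∈ Set.Ioo (0 : ℝ) (2 / 3)) (hαc : αc ∈ Set.Icc (0 : ℝ) 1)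
    (hCFL : Δt / Δx ≤ min 1 (min (4 - 6 * θ) (6 * θ)) / (1 + 6 * (Lf : ℝ) * Mν))
    (u0 : ℝ → ℝ) (hu0 : Integrable u0) (hu0bv : BoundedVariationOn u0 Set.univ)
    (hu0pos : ∀ x, 0 ≤ u0 x)
    (u : ℕ → ℤ → ℝ) (hu : SchemeHyp f ν μ β u0 Δx Δt θ αc N u) :
    ∀ k : ℝ, ∀ i : ℤ, ∀ n < N,
      |u (n + 1) i - k| - |u n i - k|
        + (Δt / Δx) * (Gnum f ν μ β (Δt / Δx) θ Δx αc (u n) i (u n i) (u n (i + 1)) k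
            - Gnum f ν μ β (Δt / Δx) θ Δx αc (u n) (i - 1) (u n (i - 1)) (u n i) k)
        + (Δt / Δx) * Real.sign (u (n + 1) i - k) * f k
            * (ν (cdisc μ β Δx αc (u n) i) - ν (cdisc μ β Δx αc (u n) (i - 1)))
      ≤ 0 := by
  obtain ⟨h0, hstep⟩ := hu
  intro k i n hn
  set lam := Δt / Δx with hlamdef
  have hlam0 : 0 < lam := div_pos hΔt hΔx
  have hMν : 0 ≤ Mν := (abs_nonneg _).trans (hνb 0)
  have hLf : 0 ≤ (Lf : ℝ) := Lf.coe_nonneg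
  have hden : (0 : ℝ) < 1 + 6 * Lf * Mν := by positivity
  have hC : lam * (1 + 6 * Lf * Mν) ≤ min 1 (min (4 - 6 * θ) (6 * θ)) :=
    (le_div_iff₀ hden).mp hCFL
  have hC3 : lam * (1 + 6 * Lf * Mν) ≤ 6 * θ :=
    hC.trans ((min_le_right _ _).trans (min_le_right _ _))
  have hC2 : lam * (1 + 6 * Lf * Mν) ≤ 4 - 6 * θ :=
    hC.trans ((min_le_right _ _).trans (min_le_left _ _))
  have h1 : lam * Lf * Mν ≤ θ := by nlinarith
  have h2 : θ + lam * Lf * Mν ≤ 1 := by nlinarith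
  set p := ν (cdisc μ β Δx αc (u n) i) with hpdef
  set q := ν (cdisc μ β Δx αc (u n) (i - 1)) with hqdef
  have hp : |p| ≤ Mν := by rw [hpdef]; exact hνb _
  have hq : |q| ≤ Mν := by rw [hqdef]; exact hνb _
  set a := u n (i - 1) with hadef
  set b := u n i with hbdef
  set c := u n (i + 1) with hcdef
  have hA : u (n + 1) i = E f lam θ p q a b c := by
    rw [hstep n hn i, hpdef, hqdef]
    exact Hs_eq f ν μ β lam θ Δx αc (u n) i _ _ _ (ne_of_gt hlam0)
  have hK : E f lam θ p q k k k = k - lam * f k * (p - q) := by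
    simp only [E]; ring
  have hVA : u (n + 1) i ≤ E f lam θ p q (max a k) (max b k) (max c k) := by
    rw [hA]
    calc E f lam θ p q a b c
        ≤ E f lam θ p q (max a k) b c :=
          E_mono_a hf hlam0.le hp hq h1 (le_max_left _ _)
      _ ≤ E f lam θ p q (max a k) (max b k) c :=
          E_mono_b hf hlam0.le hp hq h2 (le_max_left _ _)
      _ ≤ E f lam θ p q (max a k) (max b k) (max c k) :=
          E_mono_c hf hlam0.le hp hq h1 (le_max_left _ _)
  have hVB : k - lam * f k * (p - q) ≤ E f lam θ p q (max a k) (max b k) (max c k) := by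
    rw [← hK]
    calc E f lam θ p q k k k
        ≤ E f lam θ p q (max a k) k k :=
          E_mono_a hf hlam0.le hp hq h1 (le_max_right _ _)
      _ ≤ E f lam θ p q (max a k) (max b k) k :=
          E_mono_b hf hlam0.le hp hq h2 (le_max_right _ _)
      _ ≤ E f lam θ p q (max a k) (max b k) (max c k) :=
          E_mono_c hf hlam0.le hp hq h1 (le_max_right _ _)
  have hWA : E f lam θ p q (min a k) (min b k) (min c k) ≤ u (n + 1) i := by
    rw [hA]
    calc E f lam θ p q (min a k) (min b k) (min c k)
        ≤ E f lam θ p q a (min b k) (min c k) :=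
          E_mono_a hf hlam0.le hp hq h1 (min_le_left _ _)
      _ ≤ E f lam θ p q a b (min c k) :=
          E_mono_b hf hlam0.le hp hq h2 (min_le_left _ _)
      _ ≤ E f lam θ p q a b c :=
          E_mono_c hf hlam0.le hp hq h1 (min_le_left _ _)
  have hWB : E f lam θ p q (min a k) (min b k) (min c k) ≤ k - lam * f k * (p - q) := by
    rw [← hK]
    calc E f lam θ p q (min a k) (min b k) (min c k)
        ≤ E f lam θ p q k (min b k) (min c k) :=
          E_mono_a hf hlam0.le hp hq h1 (min_le_right _ _)
      _ ≤ E f lam θ p q k k (min c k) :=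
          E_mono_b hf hlam0.le hp hq h2 (min_le_right _ _)
      _ ≤ E f lam θ p q k k k :=
          E_mono_c hf hlam0.le hp hq h1 (min_le_right _ _)
  have hident : E f lam θ p q (max a k) (max b k) (max c k)
      - E f lam θ p q (min a k) (min b k) (min c k)
      = |b - k| - lam * (Gnum f ν μ β lam θ Δx αc (u n) i b c k
          - Gnum f ν μ β lam θ Δx αc (u n) (i - 1) a b k) := by
    rw [hpdef, hqdef,
      ← Hs_eq f ν μ β lam θ Δx αc (u n) i (max a k) (max b k) (max c k) (ne_of_gt hlam0),
      ← Hs_eq f ν μ β lam θ Δx αc (u n) i (min a k) (min b k) (min c k) (ne_of_gt hlam0)]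
    simp only [Gnum]
    rw [show |b - k| = max b k - min b k by rw [abs_sub_comm]; exact (max_sub_min_eq_abs b k).symm]
    ring
  have habs : |u (n + 1) i - (k - lam * f k * (p - q))|
      ≤ E f lam θ p q (max a k) (max b k) (max c k)
        - E f lam θ p q (min a k) (min b k) (min c k) :=
    abs_sub_le_iff.mpr ⟨by linarith, by linarith⟩
  have hkey : |u (n + 1) i - k| + lam * Real.sign (u (n + 1) i - k) * f k * (p - q)
      ≤ |u (n + 1) i - (k - lam * f k * (p - q))| := by
    rw [← real_sign_mul_self (u (n + 1) i - k)]
    have heq : Real.sign (u (n + 1) i - k) * (u (n + 1) i - k)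
        + lam * Real.sign (u (n + 1) i - k) * f k * (p - q)
        = Real.sign (u (n + 1) i - k) * (u (n + 1) i - (k - lam * f k * (p - q))) := by
      ring
    rw [heq]
    calc Real.sign (u (n + 1) i - k) * (u (n + 1) i - (k - lam * f k * (p - q)))
        ≤ |Real.sign (u (n + 1) i - k) * (u (n + 1) i - (k - lam * f k * (p - q)))| :=
          le_abs_self _
      _ = |Real.sign (u (n + 1) i - k)| * |u (n + 1) i - (k - lam * f k * (p - q))| :=
          abs_mul _ _
      _ ≤ 1 * |u (n + 1) i - (k - lam * f k * (p - q))| :=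
          mul_le_mul_of_nonneg_right (abs_sign_le _) (abs_nonneg _)
      _ = _ := one_mul _
  linarith [hkey, habs, hident]
end

section
/- (Quadrature error for the discrete convolution.) Let Δx > 0, x_p = pΔx, C_p = [x_{p−1/2}, x_{p+1/2}) with x_{p±1/2} = (p ± 1/2)Δx, and let w : ℝ → ℝ be the piecewise constant function w = Σ_{p∈ℤ} w_p χ_{C_p} with Δx Σ_{p∈ℤ} |w_p| < ∞. Then for every z ∈ ℝ: | ∫_ℝ μ(z − y) w(y) dy − Δx Σ_{p∈ℤ} μ(z − x_p) w_p | ≤ Lip(μ) ( Δx Σ_{p∈ℤ} |w_p| ) Δx. -/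
open MeasureTheory

/-- Quadrature error for the discrete convolution: for the piecewise constant
function `w = Σ_p w_p χ_{C_p}` (with cells `C_p = [pΔx − Δx/2, pΔx + Δx/2)`, so that
`w(y) = w_{⌊y/Δx + 1/2⌋}`) and every `z ∈ ℝ`,
`|∫ μ(z − y) w(y) dy − Δx Σ_p μ(z − x_p) w_p| ≤ Lip(μ) (Δx Σ_p |w_p|) Δx`. -/
theorem stmt15 (μ : ℝ → ℝ) (Lμ : NNReal) (Mμ : ℝ)
    (hμLip : LipschitzWith Lμ μ) (hμb : ∀ x, |μ x| ≤ Mμ)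
    (Δx : ℝ) (hΔx : 0 < Δx) (wp : ℤ → ℝ) (hw : Summable fun p : ℤ => |wp p|)
    (z : ℝ) :
    |(∫ y : ℝ, μ (z - y) * wp ⌊y / Δx + 1 / 2⌋)
        - Δx * ∑' p : ℤ, μ (z - (p : ℝ) * Δx) * wp p|
      ≤ (Lμ : ℝ) * (Δx * ∑' p : ℤ, |wp p|) * Δx := by
  set C : ℤ → Set ℝ := fun p => Set.Ico ((p : ℝ) * Δx - Δx / 2) ((p : ℝ) * Δx + Δx / 2) with hC
  have hΔx' : Δx ≠ 0 := ne_of_gt hΔx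
  have hmem : ∀ (y : ℝ) (p : ℤ), y ∈ C p ↔ ⌊y / Δx + 1 / 2⌋ = p := by
    intro y p
    rw [hC, Set.mem_Ico, Int.floor_eq_iff]
    have hy : y / Δx * Δx = y := div_mul_cancel₀ y hΔx'
    constructor
    · rintro ⟨h1, h2⟩
      constructor
      · have h : ((p : ℝ) - 1 / 2) ≤ y / Δx := (le_div_iff₀ hΔx).2 (by linarith)
        linarith
      · have h : y / Δx < (p : ℝ) + 1 / 2 := (div_lt_iff₀ hΔx).2 (by linarith)
        push_cast
        linarith
    · rintro ⟨h1, h2⟩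
      have h1' : ((p : ℝ) - 1 / 2) * Δx ≤ y := by
        have := mul_le_mul_of_nonneg_right (by linarith : ((p : ℝ) - 1/2) ≤ y / Δx) hΔx.le
        rw [hy] at this; linarith
      have h2' : y < ((p : ℝ) + 1 / 2) * Δx := by
        have h2'' : y / Δx < (p : ℝ) + 1 / 2 := by push_cast at h2; linarith
        have := mul_lt_mul_of_pos_right h2'' hΔx
        rw [hy] at this; linarith
      constructor <;> nlinarith
  have hCmeas : ∀ p, MeasurableSet (C p) := fun p => measurableSet_Ico
  have hCvol : ∀ p, volume (C p) = ENNReal.ofReal Δx := by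
    intro p; rw [hC]; simp only [Real.volume_Ico]; congr 1; ring
  have hCvol' : ∀ p, (volume (C p)).toReal = Δx := by
    intro p; rw [hCvol p, ENNReal.toReal_ofReal hΔx.le]
  have hCfin : ∀ p, volume (C p) < ⊤ := fun p => (hCvol p) ▸ ENNReal.ofReal_lt_top
  have hμcont : Continuous fun y : ℝ => μ (z - y) :=
    hμLip.continuous.comp (continuous_const.sub continuous_id)
  set g : ℤ → ℝ → ℝ := fun p => (C p).indicator (fun y => μ (z - y) * wp p) with hg
  have hint : ∀ p, IntegrableOn (fun y => μ (z - y) * wp p) (C p) := by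
    intro p
    exact ((hμcont.mul continuous_const).integrableOn_Icc (a := (p : ℝ) * Δx - Δx / 2)
      (b := (p : ℝ) * Δx + Δx / 2)).mono_set Set.Ico_subset_Icc_self
  have hgint : ∀ p, Integrable (g p) := fun p =>
    (integrable_indicator_iff (hCmeas p)).2 (hint p)
  have Mμ0 : 0 ≤ Mμ := le_trans (abs_nonneg _) (hμb 0)
  have hnorm : ∀ p, (∫ y, ‖g p y‖) ≤ Mμ * Δx * |wp p| := by
    intro p
    rw [hg]
    simp only [norm_indicator_eq_indicator_norm]
    rw [integral_indicator (hCmeas p)]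
    refine le_trans (le_abs_self _) ?_
    rw [← Real.norm_eq_abs]
    calc ‖∫ y in C p, ‖μ (z - y) * wp p‖‖
        ≤ (Mμ * |wp p|) * (volume (C p)).toReal := by
          apply norm_setIntegral_le_of_norm_le_const (hCfin p)
          intro y _
          rw [norm_norm, Real.norm_eq_abs, abs_mul]
          exact mul_le_mul_of_nonneg_right (hμb _) (abs_nonneg _)
      _ = Mμ * Δx * |wp p| := by rw [hCvol']; ring
  have hsum_norm : Summable fun p => ∫ y, ‖g p y‖ :=
    Summable.of_nonneg_of_le (fun p => integral_nonneg fun y => norm_nonneg _)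
      (fun p => hnorm p) (hw.mul_left (Mμ * Δx))
  have hpt : ∀ y : ℝ, μ (z - y) * wp ⌊y / Δx + 1 / 2⌋ = ∑' p, g p y := by
    intro y
    rw [tsum_eq_single (⌊y / Δx + 1 / 2⌋) ?_]
    · rw [hg]; simp only
      rw [Set.indicator_of_mem ((hmem y _).2 rfl)]
    · intro p hp
      rw [hg]; simp only
      rw [Set.indicator_of_notMem (fun h => hp ((hmem y p).1 h).symm)]
  have hI : (∫ y : ℝ, μ (z - y) * wp ⌊y / Δx + 1 / 2⌋) = ∑' p, ∫ y, g p y := by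
    rw [show (fun y : ℝ => μ (z - y) * wp ⌊y / Δx + 1 / 2⌋) = fun y => ∑' p, g p y from
      funext hpt]
    exact (integral_tsum_of_summable_integral_norm hgint hsum_norm).symm
  have hS1 : Summable fun p : ℤ => ∫ y, g p y := by
    apply Summable.of_norm_bounded (hw.mul_left (Mμ * Δx))
    intro p; exact le_trans (norm_integral_le_integral_norm _) (hnorm p)
  have hsum2 : ∀ p : ℤ, Δx * (μ (z - (p : ℝ) * Δx) * wp p)
      = ∫ y in C p, μ (z - (p : ℝ) * Δx) * wp p := by
    intro p
    rw [setIntegral_const, measureReal_def, hCvol', smul_eq_mul]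
  have hS2 : Summable fun p : ℤ => Δx * (μ (z - (p : ℝ) * Δx) * wp p) := by
    apply Summable.mul_left
    apply Summable.of_norm
    apply Summable.of_nonneg_of_le (fun p => norm_nonneg _) ?_ (hw.mul_left Mμ)
    intro p
    rw [Real.norm_eq_abs, abs_mul]
    exact mul_le_mul_of_nonneg_right (hμb _) (abs_nonneg _)
  have hI2 : Δx * ∑' p : ℤ, μ (z - (p : ℝ) * Δx) * wp p
      = ∑' p : ℤ, Δx * (μ (z - (p : ℝ) * Δx) * wp p) := (tsum_mul_left).symm
  rw [hI, hI2, ← Summable.tsum_sub hS1 hS2]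
  have hdiff : ∀ p : ℤ, (∫ y, g p y) - Δx * (μ (z - (p : ℝ) * Δx) * wp p)
      = ∫ y in C p, (μ (z - y) - μ (z - (p : ℝ) * Δx)) * wp p := by
    intro p
    rw [hsum2 p, hg]; simp only
    rw [integral_indicator (hCmeas p),
      ← integral_sub (hint p) ((integrableOn_const_iff).2 (Or.inr (hCfin p)))]
    congr 1; funext y; ring
  have hbound : ∀ p : ℤ, ‖∫ y in C p, (μ (z - y) - μ (z - (p : ℝ) * Δx)) * wp p‖
      ≤ ((Lμ : ℝ) * Δx * Δx) * |wp p| := by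
    intro p
    calc ‖∫ y in C p, (μ (z - y) - μ (z - (p : ℝ) * Δx)) * wp p‖
        ≤ ((Lμ : ℝ) * Δx * |wp p|) * (volume (C p)).toReal := by
          apply norm_setIntegral_le_of_norm_le_const (hCfin p)
          intro y hy
          rw [Real.norm_eq_abs, abs_mul]
          have hd : |μ (z - y) - μ (z - (p : ℝ) * Δx)| ≤ (Lμ : ℝ) * Δx := by
            have := hμLip.dist_le_mul (z - y) (z - (p : ℝ) * Δx)
            rw [Real.dist_eq, Real.dist_eq] at this
            refine this.trans ?_
            have h1 : |z - y - (z - (p : ℝ) * Δx)| ≤ Δx := by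
              rw [hC, Set.mem_Ico] at hy
              rw [abs_le]; constructor <;> [linarith [hy.2]; linarith [hy.1]]
            exact mul_le_mul_of_nonneg_left h1 Lμ.coe_nonneg
          exact mul_le_mul_of_nonneg_right hd (abs_nonneg _)
      _ = ((Lμ : ℝ) * Δx * Δx) * |wp p| := by rw [hCvol']; ring
  simp only [hdiff]
  calc |∑' p : ℤ, ∫ y in C p, (μ (z - y) - μ (z - (p : ℝ) * Δx)) * wp p|
      ≤ ∑' p : ℤ, ((Lμ : ℝ) * Δx * Δx) * |wp p| := by
        rw [← Real.norm_eq_abs]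
        have hnm : Summable fun p : ℤ =>
            ‖∫ y in C p, (μ (z - y) - μ (z - (p : ℝ) * Δx)) * wp p‖ :=
          Summable.of_nonneg_of_le (fun p => norm_nonneg _) hbound (hw.mul_left _)
        exact le_trans (norm_tsum_le_tsum_norm hnm)
          (Summable.tsum_le_tsum hbound hnm (hw.mul_left _))
    _ = (Lμ : ℝ) * (Δx * ∑' p : ℤ, |wp p|) * Δx := by
        rw [tsum_mul_left]; ring
end

section
/- (Consistency of the Lax–Friedrichs numerical entropy flux.) Fix λ > 0, θ ∈ (0, 2/3) and a real number ν̂ with |ν̂| ≤ ‖ν‖_∞. Define F(a,b) = ν̂ (f(a) + f(b))/2 − θ (b − a)/(2λ), 𝒢(a,b,k) = F(a ∨ k, b ∨ k) − F(a ∧ k, b ∧ k), and p(a,k) = sgn(a − k)(f(a) − f(k)). Then there exists a constant C₁ depending only on Lip(f), ‖ν‖_∞, θ and λ such that for all a, b, k ∈ ℝ: | 𝒢(a, b, k) − ν̂ p(a, k) | ≤ C₁ |b − a|. -/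
/-- Consistency of the Lax–Friedrichs numerical entropy flux:
with `F(a,b) = ν̂ (f(a)+f(b))/2 − θ(b−a)/(2λ)`,
`𝒢(a,b,k) = F(a∨k, b∨k) − F(a∧k, b∧k)` and `p(a,k) = sgn(a−k)(f(a)−f(k))`,
there is `C₁ = C₁(Lip(f), ‖ν‖_∞, θ, λ)` with `|𝒢(a,b,k) − ν̂ p(a,k)| ≤ C₁ |b−a|`
for every `ν̂` with `|ν̂| ≤ ‖ν‖_∞` and all `a, b, k`. -/
theorem stmt18 (f ν : ℝ → ℝ) (Lf : NNReal) (Mν : ℝ)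
    (hf : LipschitzWith Lf f) (hf0 : f 0 = 0) (hνb : ∀ x, |ν x| ≤ Mν)
    (lam θ : ℝ) (hlam : 0 < lam) (hθ : θ ∈ Set.Ioo (0 : ℝ) (2 / 3)) :
    ∃ C₁ : ℝ, ∀ νh : ℝ, |νh| ≤ Mν → ∀ a b k : ℝ,
      |(νh * (f (max a k) + f (max b k)) / 2 - θ * (max b k - max a k) / (2 * lam)
          - (νh * (f (min a k) + f (min b k)) / 2 - θ * (min b k - min a k) / (2 * lam)))
        - νh * (Real.sign (a - k) * (f a - f k))|
      ≤ C₁ * |b - a| := by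
  refine ⟨Mν * Lf + θ / lam, ?_⟩
  intro νh hνh a b k
  have hpk : f (max a k) - f (min a k) = Real.sign (a - k) * (f a - f k) := by
    rcases lt_trichotomy a k with h | h | h
    · rw [max_eq_right h.le, min_eq_left h.le, Real.sign_of_neg (by linarith)]
      ring
    · simp [h]
    · rw [max_eq_left h.le, min_eq_right h.le, Real.sign_of_pos (by linarith)]
      ring
  have hlip : ∀ x y : ℝ, |f x - f y| ≤ Lf * |x - y| := by
    intro x y
    simpa [Real.dist_eq] using hf.dist_le_mul x y
  have h1 : |f (max b k) - f (max a k)| ≤ Lf * |b - a| :=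
    (hlip _ _).trans (by
      have := abs_max_sub_max_le_abs b a k
      nlinarith [Lf.coe_nonneg])
  have h2 : |f (min b k) - f (min a k)| ≤ Lf * |b - a| :=
    (hlip _ _).trans (by
      have : |min b k - min a k| ≤ |b - a| := by
        simpa using abs_min_sub_min_le_max b k a k
      nlinarith [Lf.coe_nonneg])
  have h3 : |max b k - max a k| ≤ |b - a| := abs_max_sub_max_le_abs b a k
  have h4 : |min b k - min a k| ≤ |b - a| := by
    simpa using abs_min_sub_min_le_max b k a k
  have hE : (νh * (f (max a k) + f (max b k)) / 2 - θ * (max b k - max a k) / (2 * lam)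
          - (νh * (f (min a k) + f (min b k)) / 2 - θ * (min b k - min a k) / (2 * lam)))
        - νh * (Real.sign (a - k) * (f a - f k))
      = νh * (f (max b k) - f (max a k)) / 2 - νh * (f (min b k) - f (min a k)) / 2
        - θ * (max b k - max a k) / (2 * lam) + θ * (min b k - min a k) / (2 * lam) := by
    rw [← hpk]; ring
  rw [hE]
  have hMν : 0 ≤ Mν := (abs_nonneg νh).trans hνh
  have hθ0 : 0 < θ := hθ.1
  set A := νh * (f (max b k) - f (max a k)) / 2
  set B := νh * (f (min b k) - f (min a k)) / 2
  set C := θ * (max b k - max a k) / (2 * lam)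
  set D := θ * (min b k - min a k) / (2 * lam)
  have htri : |A - B - C + D| ≤ |A| + |B| + |C| + |D| := by
    calc |A - B - C + D| ≤ |A - B - C| + |D| := abs_add_le _ _
      _ ≤ |A - B| + |C| + |D| := by linarith [abs_sub (A - B) C]
      _ ≤ |A| + |B| + |C| + |D| := by linarith [abs_sub A B]
  have hA : |A| ≤ Mν * Lf * |b - a| / 2 := by
    rw [abs_div, abs_mul]
    have := mul_le_mul hνh h1 (abs_nonneg _) hMν
    simp only [abs_two]
    nlinarith
  have hB : |B| ≤ Mν * Lf * |b - a| / 2 := by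
    rw [abs_div, abs_mul]
    have := mul_le_mul hνh h2 (abs_nonneg _) hMν
    simp only [abs_two]
    nlinarith
  have hC : |C| ≤ θ * |b - a| / (2 * lam) := by
    rw [abs_div, abs_mul, abs_of_pos hθ0, abs_of_pos (by positivity : (0:ℝ) < 2 * lam)]
    have : θ * |max b k - max a k| ≤ θ * |b - a| := by nlinarith
    exact div_le_div_of_nonneg_right this (by positivity) |>.trans (le_refl _)
  have hD : |D| ≤ θ * |b - a| / (2 * lam) := by
    rw [abs_div, abs_mul, abs_of_pos hθ0, abs_of_pos (by positivity : (0:ℝ) < 2 * lam)]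
    have : θ * |min b k - min a k| ≤ θ * |b - a| := by nlinarith
    exact div_le_div_of_nonneg_right this (by positivity) |>.trans (le_refl _)
  have hfinal : θ * |b - a| / (2 * lam) + θ * |b - a| / (2 * lam) = θ / lam * |b - a| := by
    field_simp; ring
  calc |A - B - C + D| ≤ |A| + |B| + |C| + |D| := htri
    _ ≤ Mν * Lf * |b - a| / 2 + Mν * Lf * |b - a| / 2
        + θ * |b - a| / (2 * lam) + θ * |b - a| / (2 * lam) := by linarith
    _ = (Mν * Lf + θ / lam) * |b - a| := by field_simp; ring
end
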